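/- arXiv:math/0312424 — 3 statements merged into one kernel-verified Lean document; each statement's English description precedes it below -/
import Mathlib

section
/- The number of labelled oriented-edge-rooted k-gonal 2-trees with n polygons is ((k-1)n+1)^{n-1}. -/
namespace KGonal2Trees

/-- Vertex set of the canonical model: the two endpoints of the root edge,
plus `k - 2` new vertices for each of the `n` polygons. -/
abbrev V (k n : ℕ) : Type := Fin 2 ⊕ (Fin n × Fin (k - 2))

/-- A code describes, for each polygon (labelled by `Fin n`), the edge to which it is glued:
`none` means the (oriented) root edge, and `some (i, t)` means the `t`-th side edge of
polygon `i`. -/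
abbrev Code (k n : ℕ) : Type := Fin n → Option (Fin n × Fin (k - 1))

/-- Tree-likeness: the "parent polygon" relation admits a height function,
i.e. it has no cycles. -/
def Acyclic {k n : ℕ} (f : Code k n) : Prop :=
  ∃ h : Fin n → ℕ, ∀ (j i : Fin n) (t : Fin (k - 1)), f j = some (i, t) → h i < h j

/-- The `s`-th vertex (`0 ≤ s ≤ k-1`) along the non-attached part of the cycle of polygon `j`,
when the attaching (oriented) edge of `j` is `(a, b)`:  `u_0 = b`,
`u_s = (j, s-1)` for `1 ≤ s ≤ k-2`, and `u_{k-1} = a`. -/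
def pvert (k n : ℕ) (a b : V k n) (j : Fin n) (s : ℕ) : V k n :=
  if h : 1 ≤ s ∧ s ≤ k - 2 then Sum.inr (j, ⟨s - 1, by omega⟩)
  else if s = 0 then b else a

/-- The oriented attaching edge of polygon `j` (computed with fuel; fuel `n + 1` suffices
for acyclic codes). -/
def anchor (k n : ℕ) : ℕ → Code k n → Fin n → V k n × V k n
  | 0, _, _ => (Sum.inl 0, Sum.inl 1)
  | fuel + 1, f, j =>
    match f j with
    | none => (Sum.inl 0, Sum.inl 1)
    | some (i, t) =>
      let p := anchor k n fuel f i
      (pvert k n p.1 p.2 i (t : ℕ), pvert k n p.1 p.2 i ((t : ℕ) + 1))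

/-- The `s`-th vertex (`0 ≤ s ≤ k-1`) of the oriented cycle of polygon `j`. -/
def cyc (k n : ℕ) (f : Code k n) (j : Fin n) (s : ℕ) : V k n :=
  if s = 0 then (anchor k n (n + 1) f j).1
  else pvert k n (anchor k n (n + 1) f j).1 (anchor k n (n + 1) f j).2 j (s - 1)

/-- The set of oriented edges of polygon `j` (the oriented `k`-cycle). -/
def polyO (k n : ℕ) (f : Code k n) (j : Fin n) : Finset (V k n × V k n) :=
  Finset.image (fun s : Fin k => (cyc k n f j (s : ℕ), cyc k n f j (((s : ℕ) + 1) % k)))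
    Finset.univ

/-- The set of unoriented edges of polygon `j`. -/
def polyU (k n : ℕ) (f : Code k n) (j : Fin n) : Finset (Sym2 (V k n)) :=
  Finset.image
    (fun s : Fin k => s(cyc k n f j (s : ℕ), cyc k n f j (((s : ℕ) + 1) % k)))
    Finset.univ

/-- Codes of labelled oriented-edge-rooted `k`-gonal 2-trees on `n` polygons. -/
abbrev Enc (k n : ℕ) : Type := {f : Code k n // Acyclic f}

/-- Isomorphism of labelled oriented-edge-rooted structures: a bijection of vertices fixing the
oriented root edge and sending each polygon (with its orientation and label) to itself. -/
def RelRootLab (k n : ℕ) (f g : Enc k n) : Prop :=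
  ∃ φ : V k n ≃ V k n,
    φ (Sum.inl 0) = Sum.inl 0 ∧ φ (Sum.inl 1) = Sum.inl 1 ∧
    ∀ j, polyO k n g.1 j = (polyO k n f.1 j).image (Prod.map ⇑φ ⇑φ)

/-- Isomorphism of labelled oriented (unrooted) structures. -/
def RelOriLab (k n : ℕ) (f g : Enc k n) : Prop :=
  ∃ φ : V k n ≃ V k n, ∀ j, polyO k n g.1 j = (polyO k n f.1 j).image (Prod.map ⇑φ ⇑φ)

/-- Isomorphism of labelled unoriented (unrooted) structures. -/
def RelUnLab (k n : ℕ) (f g : Enc k n) : Prop :=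
  ∃ φ : V k n ≃ V k n, ∀ j, polyU k n g.1 j = (polyU k n f.1 j).image (Sym2.map ⇑φ)

/-- Isomorphism of unlabelled oriented (unrooted) structures. -/
def RelOri (k n : ℕ) (f g : Enc k n) : Prop :=
  ∃ (φ : V k n ≃ V k n) (σ : Fin n ≃ Fin n),
    ∀ j, polyO k n g.1 (σ j) = (polyO k n f.1 j).image (Prod.map ⇑φ ⇑φ)

/-- Isomorphism of unlabelled unoriented (unrooted) structures. -/
def RelUn (k n : ℕ) (f g : Enc k n) : Prop :=
  ∃ (φ : V k n ≃ V k n) (σ : Fin n ≃ Fin n),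
    ∀ j, polyU k n g.1 (σ j) = (polyU k n f.1 j).image (Sym2.map ⇑φ)

/-- Isomorphism of unlabelled oriented-edge-rooted structures. -/
def RelRoot (k n : ℕ) (f g : Enc k n) : Prop :=
  ∃ (φ : V k n ≃ V k n) (σ : Fin n ≃ Fin n),
    φ (Sum.inl 0) = Sum.inl 0 ∧ φ (Sum.inl 1) = Sum.inl 1 ∧
    ∀ j, polyO k n g.1 (σ j) = (polyO k n f.1 j).image (Prod.map ⇑φ ⇑φ)

/-- Isomorphism of unlabelled edge-rooted unoriented structures: the root edge is preserved
as an unoriented edge. -/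
def RelRootUn (k n : ℕ) (f g : Enc k n) : Prop :=
  ∃ (φ : V k n ≃ V k n) (σ : Fin n ≃ Fin n),
    Sym2.map ⇑φ s(Sum.inl 0, Sum.inl 1) =
      s((Sum.inl (0 : Fin 2) : V k n), Sum.inl 1) ∧
    ∀ j, polyU k n g.1 (σ j) = (polyU k n f.1 j).image (Sym2.map ⇑φ)

/-- An oriented-edge-rooted structure is fixed by orientation reversal `τ` if it is isomorphic
(as an unlabelled rooted structure) to the structure obtained by reversing all edge
orientations (in particular that of the root edge). -/
def FixedRev (k n : ℕ) (f : Enc k n) : Prop :=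
  ∃ (φ : V k n ≃ V k n) (σ : Fin n ≃ Fin n),
    φ (Sum.inl 0) = Sum.inl 1 ∧ φ (Sum.inl 1) = Sum.inl 0 ∧
    ∀ j, polyO k n f.1 (σ j) = ((polyO k n f.1 j).image (Prod.map ⇑φ ⇑φ)).image Prod.swap

/-- Number of labelled oriented-edge-rooted `k`-gonal 2-trees with `n` polygons. -/
noncomputable def aRootLab (k n : ℕ) : ℕ := Nat.card (Quot (RelRootLab k n))

/-- Number of labelled oriented `k`-gonal 2-trees with `n` polygons. -/
noncomputable def aOriLab (k n : ℕ) : ℕ := Nat.card (Quot (RelOriLab k n))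

/-- Number of labelled (unoriented) `k`-gonal 2-trees with `n` polygons. -/
noncomputable def aUnLab (k n : ℕ) : ℕ := Nat.card (Quot (RelUnLab k n))

/-- Number of unlabelled oriented `k`-gonal 2-trees with `n` polygons. -/
noncomputable def aOri (k n : ℕ) : ℕ := Nat.card (Quot (RelOri k n))

/-- Number of unlabelled (unoriented) `k`-gonal 2-trees with `n` polygons. -/
noncomputable def aUn (k n : ℕ) : ℕ := Nat.card (Quot (RelUn k n))

/-- Number of unlabelled oriented-edge-rooted `k`-gonal 2-trees with `n` polygons. -/
noncomputable def bRoot (k n : ℕ) : ℕ := Nat.card (Quot (RelRoot k n))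

/-- Number of unlabelled oriented-edge-rooted structures fixed by orientation reversal. -/
noncomputable def bRootFix (k n : ℕ) : ℕ :=
  Nat.card {c : Quot (RelRoot k n) // ∃ f, Quot.mk (RelRoot k n) f = c ∧ FixedRev k n f}

/-- Number of unlabelled edge-rooted (unoriented) `k`-gonal 2-trees with `n` polygons. -/
noncomputable def aRootUn (k n : ℕ) : ℕ := Nat.card (Quot (RelRootUn k n))


section Dynamics

variable {k n : ℕ}

/-- One step of the parent map, acting on `Option (Fin n)`. -/
def pstep (f : Code k n) : Option (Fin n) → Option (Fin n) :=
  fun o => o.bind fun j => (f j).map Prod.fst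

@[simp] lemma pstep_none (f : Code k n) : pstep f none = none := rfl

@[simp] lemma pstep_some (f : Code k n) (j : Fin n) :
    pstep f (some j) = (f j).map Prod.fst := rfl

lemma pstep_absorb (f : Code k n) {r s : ℕ} {o : Option (Fin n)}
    (h : (pstep f)^[r] o = none) (hrs : r ≤ s) : (pstep f)^[s] o = none := by
  obtain ⟨t, rfl⟩ := Nat.exists_eq_add_of_le hrs
  rw [Nat.add_comm, Function.iterate_add_apply, h]
  induction t with
  | zero => rfl
  | succ t ih => rw [Function.iterate_succ_apply, pstep_none, ih (by omega)]

/-- `o` eventually reaches `none` under the parent map. -/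
def Reaches (f : Code k n) (o : Option (Fin n)) : Prop := ∃ r, (pstep f)^[r] o = none

lemma acyclic_iff_reaches (f : Code k n) :
    Acyclic f ↔ ∀ j, Reaches f (some j) := by
  constructor
  · rintro ⟨h, hh⟩ j
    have key : ∀ m j, h j < m → Reaches f (some j) := by
      intro m
      induction m with
      | zero => intro j hj; omega
      | succ m ih =>
        intro j hj
        cases hf : f j with
        | none => exact ⟨1, by simp [Function.iterate_one, pstep_some, hf]⟩
        | some p =>
          obtain ⟨i, t⟩ := p
          obtain ⟨r, hr⟩ := ih i (by have := hh j i t hf; omega)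
          exact ⟨r + 1, by
            rw [Function.iterate_succ_apply, pstep_some, hf]
            simpa using hr⟩
    exact key (h j + 1) j (Nat.lt_succ_self _)
  · intro hre
    refine ⟨fun j => Nat.find (hre j), ?_⟩
    intro j i t hf
    show Nat.find (hre i) < Nat.find (hre j)
    have h1 : (pstep f)^[Nat.find (hre j)] (some j) = none := Nat.find_spec (hre j)
    have hpos : 0 < Nat.find (hre j) := by
      rcases Nat.eq_zero_or_pos (Nat.find (hre j)) with h0 | h0
      · rw [h0] at h1; simp at h1
      · exact h0
    have h2 : (pstep f)^[Nat.find (hre j) - 1] (some i) = none := by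
      have : (pstep f)^[(Nat.find (hre j) - 1) + 1] (some j) = none := by
        rw [Nat.sub_add_cancel hpos]; exact h1
      rw [Function.iterate_succ_apply, pstep_some, hf] at this
      simpa using this
    have : Nat.find (hre i) ≤ Nat.find (hre j) - 1 := Nat.find_le h2
    omega

/-- Before reaching `none`, the trajectory consists of distinct values. -/
lemma traj_inj (f : Code k n) {o : Option (Fin n)} (hre : Reaches f o)
    {a b : ℕ} (hab : a < b) (hb : b < Nat.find hre) :
    (pstep f)^[a] o ≠ (pstep f)^[b] o := by
  intro hEq
  have key : ∀ t : ℕ, (pstep f)^[a + t * (b - a)] o = (pstep f)^[a] o := by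
    intro t
    induction t with
    | zero => simp
    | succ t ih =>
      have : a + (t + 1) * (b - a) = (b - a) + (a + t * (b - a)) := by ring
      rw [this, Function.iterate_add_apply, ih, ← Function.iterate_add_apply]
      have : b - a + a = b := by omega
      rw [this, ← hEq]
  have hnone : (pstep f)^[Nat.find hre] o = none := Nat.find_spec hre
  have h2 : (pstep f)^[a + Nat.find hre * (b - a)] o = none :=
    pstep_absorb f hnone (by have h3 : Nat.find hre * 1 ≤ Nat.find hre * (b - a) := Nat.mul_le_mul_left _ (by omega); omega)
  rw [key, hEq] at h2
  exact Nat.find_min hre hb h2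

/-- The value of the trajectory strictly before `Nat.find` is a `some`. -/
lemma traj_some (f : Code k n) {o : Option (Fin n)} (hre : Reaches f o)
    {a : ℕ} (ha : a < Nat.find hre) : ∃ v, (pstep f)^[a] o = some v := by
  cases h : (pstep f)^[a] o with
  | none => exact absurd h (Nat.find_min hre ha)
  | some v => exact ⟨v, rfl⟩

lemma find_le_n (f : Code k n) {o : Option (Fin n)} (hre : Reaches f o) :
    Nat.find hre ≤ n := by
  by_contra hlt
  push_neg at hlt
  have hfn : ∀ a : Fin (n + 1), ∃ v, (pstep f)^[(a : ℕ)] o = some v := by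
    intro a; exact traj_some f hre (by omega)
  choose g hg using hfn
  have hginj : Function.Injective g := by
    intro a b hEq
    by_contra hne
    rcases Nat.lt_or_ge (a : ℕ) (b : ℕ) with h | h
    · exact traj_inj f hre h (by omega) (by rw [hg a, hg b, hEq])
    · have h' : (b : ℕ) < (a : ℕ) := by
        rcases Nat.lt_or_ge (b : ℕ) (a : ℕ) with h' | h'
        · exact h'
        · exact absurd (Fin.ext (by omega)) hne
      exact traj_inj f hre h' (by omega) (by rw [hg a, hg b, hEq])
  have := Fintype.card_le_of_injective g hginj
  simp at this

end Dynamics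

section Structure

variable {k n : ℕ}

lemma find_lt_of_parent {f : Code k n} (hre : ∀ j, Reaches f (some j))
    {j i : Fin n} {t : Fin (k - 1)} (hf : f j = some (i, t)) :
    Nat.find (hre i) < Nat.find (hre j) := by
  have h1 : (pstep f)^[Nat.find (hre j)] (some j) = none := Nat.find_spec (hre j)
  have hpos : 0 < Nat.find (hre j) := by
    rcases Nat.eq_zero_or_pos (Nat.find (hre j)) with h0 | h0
    · rw [h0] at h1; simp at h1
    · exact h0
  have h2 : (pstep f)^[Nat.find (hre j) - 1] (some i) = none := by
    have : (pstep f)^[(Nat.find (hre j) - 1) + 1] (some j) = none := by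
      rw [Nat.sub_add_cancel hpos]; exact h1
    rw [Function.iterate_succ_apply, pstep_some, hf] at this
    simpa using this
  have : Nat.find (hre i) ≤ Nat.find (hre j) - 1 := Nat.find_le h2
  omega

/-- The stabilized anchor. -/
def anc (k n : ℕ) (f : Code k n) (j : Fin n) : V k n × V k n := anchor k n (n + 1) f j

lemma anchor_stable {f : Code k n} (hre : ∀ j, Reaches f (some j)) :
    ∀ (m : ℕ) (j : Fin n) (fuel fuel' : ℕ), Nat.find (hre j) ≤ m →
      Nat.find (hre j) ≤ fuel → Nat.find (hre j) ≤ fuel' →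
      anchor k n fuel f j = anchor k n fuel' f j := by
  intro m
  induction m with
  | zero =>
    intro j fuel fuel' hm _ _
    exfalso
    have h1 : (pstep f)^[Nat.find (hre j)] (some j) = none := Nat.find_spec (hre j)
    have h0 : Nat.find (hre j) = 0 := by omega
    rw [h0] at h1; simp at h1
  | succ m ih =>
    intro j fuel fuel' hm hfu hfu'
    have hpos : 0 < Nat.find (hre j) := by
      have h1 : (pstep f)^[Nat.find (hre j)] (some j) = none := Nat.find_spec (hre j)
      rcases Nat.eq_zero_or_pos (Nat.find (hre j)) with h0 | h0
      · rw [h0] at h1; simp at h1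
      · exact h0
    obtain ⟨a, rfl⟩ : ∃ a, fuel = a + 1 := ⟨fuel - 1, by omega⟩
    obtain ⟨b, rfl⟩ : ∃ b, fuel' = b + 1 := ⟨fuel' - 1, by omega⟩
    cases hf : f j with
    | none => simp [anchor, hf]
    | some p =>
      obtain ⟨i, t⟩ := p
      have hlt := find_lt_of_parent hre hf
      have : anchor k n a f i = anchor k n b f i := ih i a b (by omega) (by omega) (by omega)
      simp [anchor, hf, this]

lemma anc_none {f : Code k n} {j : Fin n} (hf : f j = none) :
    anc k n f j = (Sum.inl 0, Sum.inl 1) := by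
  simp [anc, anchor, hf]

lemma anc_some {f : Code k n} (hre : ∀ j, Reaches f (some j))
    {j i : Fin n} {t : Fin (k - 1)} (hf : f j = some (i, t)) :
    anc k n f j = (pvert k n (anc k n f i).1 (anc k n f i).2 i (t : ℕ),
      pvert k n (anc k n f i).1 (anc k n f i).2 i ((t : ℕ) + 1)) := by
  have hstab : anchor k n n f i = anchor k n (n + 1) f i :=
    anchor_stable hre (Nat.find (hre i)) i n (n + 1) le_rfl
      (by have := find_le_n f (hre i); omega)
      (by have := find_le_n f (hre i); omega)
  show anchor k n (n + 1) f j = _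
  rw [show (n + 1) = n + 1 from rfl]
  simp only [anchor, hf]
  rw [hstab]
  rfl

lemma pvert_zero (a b : V k n) (j : Fin n) : pvert k n a b j 0 = b := by
  simp [pvert]

lemma pvert_mid (a b : V k n) (j : Fin n) {s : ℕ} (h1 : 1 ≤ s) (h2 : s ≤ k - 2) :
    pvert k n a b j s = Sum.inr (j, ⟨s - 1, by omega⟩) := by
  simp [pvert, h1, h2]

lemma pvert_high (a b : V k n) (j : Fin n) {s : ℕ} (h1 : k - 2 < s) :
    pvert k n a b j s = a := by
  have h0 : s ≠ 0 := by omega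
  simp [pvert, h0]
  omega

lemma cyc_zero (f : Code k n) (j : Fin n) : cyc k n f j 0 = (anc k n f j).1 := by
  simp [cyc, anc]

lemma cyc_one (f : Code k n) (j : Fin n) : cyc k n f j 1 = (anc k n f j).2 := by
  simp [cyc, anc, pvert]

lemma cyc_mid (hk : 3 ≤ k) (f : Code k n) (j : Fin n) {s : ℕ} (h1 : 2 ≤ s) (h2 : s ≤ k - 1) :
    cyc k n f j s = Sum.inr (j, ⟨s - 2, by omega⟩) := by
  have h0 : s ≠ 0 := by omega
  simp only [cyc, h0, if_false]
  rw [pvert_mid _ _ _ (by omega) (by omega)]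
  simp only [Sum.inr.injEq, Prod.mk.injEq, Fin.mk.injEq]
  exact ⟨trivial, by omega⟩

/-- A vertex is `Ok` for `j` if it is an `inl` or an interior vertex of a polygon
of smaller depth. -/
def OkV (d : Fin n → ℕ) (j : Fin n) (v : V k n) : Prop :=
  (∃ c, v = Sum.inl c) ∨ ∃ i t, v = Sum.inr (i, t) ∧ d i < d j

lemma anchor_ok (hk : 3 ≤ k) {f : Code k n} (hre : ∀ j, Reaches f (some j)) :
    ∀ j : Fin n, (anc k n f j).1 ≠ (anc k n f j).2 ∧
      OkV (fun j => Nat.find (hre j)) j (anc k n f j).1 ∧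
      OkV (fun j => Nat.find (hre j)) j (anc k n f j).2 := by
  set d : Fin n → ℕ := fun j => Nat.find (hre j) with hd
  suffices key : ∀ (m : ℕ) (j : Fin n), d j ≤ m → (anc k n f j).1 ≠ (anc k n f j).2 ∧
      OkV d j (anc k n f j).1 ∧ OkV d j (anc k n f j).2 by
    intro j; exact key (d j) j le_rfl
  intro m
  induction m with
  | zero =>
    intro j hj
    exfalso
    have h1 : (pstep f)^[d j] (some j) = none := Nat.find_spec (hre j)
    have : d j = 0 := by omega
    rw [this] at h1; simp at h1
  | succ m ih =>
    intro j hj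
    cases hf : f j with
    | none =>
      rw [anc_none hf]
      refine ⟨by simp, Or.inl ⟨0, rfl⟩, Or.inl ⟨1, rfl⟩⟩
    | some p =>
      obtain ⟨i, t⟩ := p
      have hlt : d i < d j := find_lt_of_parent hre hf
      obtain ⟨hne, hA, hB⟩ := ih i (by omega)
      have ht : (t : ℕ) ≤ k - 2 := by have := t.isLt; omega
      rw [anc_some hre hf]
      have hup : ∀ v : V k n, OkV d i v → OkV d j v := by
        rintro v (⟨c, rfl⟩ | ⟨i', t', rfl, h⟩)
        · exact Or.inl ⟨c, rfl⟩
        · exact Or.inr ⟨i', t', rfl, by omega⟩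
      rcases Nat.eq_zero_or_pos (t : ℕ) with ht0 | ht0
      · -- t = 0 : (B_i, inr (i,0))
        rw [ht0, pvert_zero, pvert_mid _ _ _ (by omega) (by omega)]
        refine ⟨?_, hup _ hB, Or.inr ⟨i, _, rfl, hlt⟩⟩
        rcases hB with ⟨c, hc⟩ | ⟨i', t', hB', h⟩
        · rw [hc]; simp
        · rw [hB']; intro hEq
          have hii : i' = i := by
            have := Sum.inr.inj hEq
            exact (Prod.mk.injEq _ _ _ _ ▸ this).1
          rw [hii] at h; omega
      · rcases Nat.lt_or_ge (t : ℕ) (k - 2) with ht1 | ht1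
        · -- 1 ≤ t ≤ k-3 : (inr (i, t-1), inr (i, t))
          rw [pvert_mid _ _ _ (by omega) (by omega), pvert_mid _ _ _ (by omega) (by omega)]
          refine ⟨?_, Or.inr ⟨i, _, rfl, hlt⟩, Or.inr ⟨i, _, rfl, hlt⟩⟩
          intro hEq
          have := Sum.inr.inj hEq
          have h2 := (Prod.mk.injEq _ _ _ _ ▸ this).2
          have := Fin.mk.injEq _ _ _ _ ▸ h2
          omega
        · -- t = k - 2 : (inr (i, k-3), A_i)
          have ht2 : (t : ℕ) = k - 2 := by omega
          rw [pvert_mid _ _ _ (by omega) (by omega), pvert_high _ _ _ (by omega)]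
          refine ⟨?_, Or.inr ⟨i, _, rfl, hlt⟩, hup _ hA⟩
          rcases hA with ⟨c, hc⟩ | ⟨i', t', hA', h⟩
          · rw [hc]; simp
          · rw [hA']; intro hEq
            have h5 := Sum.inr.inj hEq
            have hii : i = i' := (Prod.mk.injEq _ _ _ _ ▸ h5).1
            rw [← hii] at h; omega

end Structure

section Part1

variable {k n : ℕ}

lemma cyc_inr (hk : 3 ≤ k) {f : Code k n} (hre : ∀ j, Reaches f (some j))
    {j i : Fin n} {t : Fin (k - 2)} {s : ℕ} (hs : s < k)
    (h : cyc k n f j s = Sum.inr (i, t)) :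
    (i = j ∧ s = (t : ℕ) + 2) ∨ (s ≤ 1 ∧ Nat.find (hre i) < Nat.find (hre j)) := by
  obtain ⟨hne, hA, hB⟩ := anchor_ok hk hre j
  rcases Nat.lt_or_ge s 2 with hs2 | hs2
  · interval_cases s
    · rw [cyc_zero] at h
      rcases hA with ⟨c, hc⟩ | ⟨i', t', hv, hd⟩
      · rw [hc] at h; simp at h
      · rw [hv] at h
        obtain ⟨h1, h2⟩ := Prod.mk.injEq _ _ _ _ ▸ Sum.inr.inj h
        exact Or.inr ⟨by omega, h1 ▸ hd⟩
    · rw [cyc_one] at h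
      rcases hB with ⟨c, hc⟩ | ⟨i', t', hv, hd⟩
      · rw [hc] at h; simp at h
      · rw [hv] at h
        obtain ⟨h1, h2⟩ := Prod.mk.injEq _ _ _ _ ▸ Sum.inr.inj h
        exact Or.inr ⟨by omega, h1 ▸ hd⟩
  · rw [cyc_mid hk f j hs2 (by omega)] at h
    obtain ⟨h1, h2⟩ := Prod.mk.injEq _ _ _ _ ▸ Sum.inr.inj h
    refine Or.inl ⟨h1.symm, ?_⟩
    have := Fin.mk.injEq _ _ _ _ ▸ h2
    have h3 : s - 2 = (t : ℕ) := by
      have := congrArg Fin.val h2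
      simpa using this
    omega

lemma cyc_inj (hk : 3 ≤ k) {f : Code k n} (hre : ∀ j, Reaches f (some j))
    {j : Fin n} {s s' : ℕ} (hs : s < k) (hs' : s' < k)
    (h : cyc k n f j s = cyc k n f j s') : s = s' := by
  obtain ⟨hne, hA, hB⟩ := anchor_ok hk hre j
  have H : ∀ a b, a < k → b < k → a < b → cyc k n f j a ≠ cyc k n f j b := by
    intro a b ha hb hab hEq
    rcases Nat.lt_or_ge a 2 with ha2 | ha2
    · rcases Nat.lt_or_ge b 2 with hb2 | hb2
      · -- a = 0, b = 1
        have ha0 : a = 0 := by omega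
        have hb1 : b = 1 := by omega
        rw [ha0, hb1, cyc_zero, cyc_one] at hEq
        exact hne hEq
      · rw [cyc_mid hk f j hb2 (by omega)] at hEq
        interval_cases a
        · rw [cyc_zero] at hEq
          rcases hA with ⟨c, hc⟩ | ⟨i', t', hv, hd⟩
          · rw [hc] at hEq; simp at hEq
          · rw [hv] at hEq
            obtain ⟨h1, _⟩ := Prod.mk.injEq _ _ _ _ ▸ Sum.inr.inj hEq
            rw [h1] at hd; omega
        · rw [cyc_one] at hEq
          rcases hB with ⟨c, hc⟩ | ⟨i', t', hv, hd⟩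
          · rw [hc] at hEq; simp at hEq
          · rw [hv] at hEq
            obtain ⟨h1, _⟩ := Prod.mk.injEq _ _ _ _ ▸ Sum.inr.inj hEq
            rw [h1] at hd; omega
    · have hb2 : 2 ≤ b := by omega
      rw [cyc_mid hk f j ha2 (by omega), cyc_mid hk f j hb2 (by omega)] at hEq
      obtain ⟨_, h2⟩ := Prod.mk.injEq _ _ _ _ ▸ Sum.inr.inj hEq
      have := congrArg Fin.val h2
      simp at this
      omega
  rcases Nat.lt_trichotomy s s' with h1 | h1 | h1
  · exact absurd h (H s s' hs hs' h1)
  · exact h1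
  · exact absurd h.symm (H s' s hs' hs h1)

lemma edge_mem (hk : 3 ≤ k) (f : Code k n) (j : Fin n) {s : ℕ} (hs : s < k) :
    (cyc k n f j s, cyc k n f j ((s + 1) % k)) ∈ polyO k n f j := by
  apply Finset.mem_image.2
  exact ⟨⟨s, hs⟩, Finset.mem_univ _, rfl⟩

lemma mem_polyO (hk : 3 ≤ k) {f : Code k n} {j : Fin n} {e : V k n × V k n}
    (he : e ∈ polyO k n f j) :
    ∃ s, s < k ∧ e = (cyc k n f j s, cyc k n f j ((s + 1) % k)) := by
  obtain ⟨a, _, ha⟩ := Finset.mem_image.1 he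
  exact ⟨(a : ℕ), a.isLt, ha.symm⟩

lemma out_unique (hk : 3 ≤ k) {f : Code k n} (hre : ∀ j, Reaches f (some j))
    {j : Fin n} {x y y' : V k n}
    (h1 : (x, y) ∈ polyO k n f j) (h2 : (x, y') ∈ polyO k n f j) : y = y' := by
  obtain ⟨s, hs, he⟩ := mem_polyO hk h1
  obtain ⟨s', hs', he'⟩ := mem_polyO hk h2
  simp only [Prod.mk.injEq] at he he'
  obtain ⟨hx, hy⟩ := he
  obtain ⟨hx', hy'⟩ := he'
  have : s = s' := cyc_inj hk hre hs hs' (hx.symm.trans hx')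
  rw [hy, hy', this]

lemma anc_eq_cyc (hk : 3 ≤ k) {f : Code k n} (hre : ∀ j, Reaches f (some j))
    {j i : Fin n} {t : Fin (k - 1)} (hf : f j = some (i, t)) :
    (anc k n f j).1 = cyc k n f i ((t : ℕ) + 1) ∧
    (anc k n f j).2 = cyc k n f i (((t : ℕ) + 2) % k) := by
  have ht : (t : ℕ) ≤ k - 2 := by have := t.isLt; omega
  rw [anc_some hre hf]
  constructor
  · show pvert k n _ _ i (t : ℕ) = cyc k n f i ((t : ℕ) + 1)
    simp only [cyc]
    rw [if_neg (by omega)]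
    congr 1
  · show pvert k n _ _ i ((t : ℕ) + 1) = cyc k n f i (((t : ℕ) + 2) % k)
    rcases Nat.lt_or_ge ((t : ℕ) + 2) k with h2 | h2
    · rw [Nat.mod_eq_of_lt h2]
      simp only [cyc]
      rw [if_neg (by omega)]
      congr 1
    · have ht2 : (t : ℕ) = k - 2 := by omega
      have : ((t : ℕ) + 2) % k = 0 := by
        have : (t : ℕ) + 2 = k := by omega
        simp [this]
      rw [this, cyc_zero, pvert_high _ _ _ (by omega)]

lemma root_anc (hk : 3 ≤ k) {f : Code k n} (hre : ∀ j, Reaches f (some j))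
    {j : Fin n} (h1 : ∃ c, (anc k n f j).1 = Sum.inl c)
    (h2 : ∃ c, (anc k n f j).2 = Sum.inl c) : f j = none := by
  cases hf : f j with
  | none => rfl
  | some p =>
    obtain ⟨i, t⟩ := p
    exfalso
    have ht : (t : ℕ) ≤ k - 2 := by have := t.isLt; omega
    have hanc := anc_some hre hf
    rcases Nat.eq_zero_or_pos (t : ℕ) with ht0 | ht0
    · obtain ⟨c, hc⟩ := h2
      rw [hanc] at hc
      simp only at hc
      rw [ht0, pvert_mid _ _ _ (by omega) (by omega)] at hc
      simp at hc
    · obtain ⟨c, hc⟩ := h1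
      rw [hanc] at hc
      simp only at hc
      rw [pvert_mid _ _ _ (by omega) (by omega)] at hc
      simp at hc

lemma cyc_chain (hk : 3 ≤ k) {f g : Code k n} (hre_g : ∀ j, Reaches g (some j))
    (φ : V k n ≃ V k n) {j : Fin n}
    (hpoly : polyO k n g j = (polyO k n f j).image (Prod.map ⇑φ ⇑φ))
    (h0 : φ (cyc k n f j 0) = cyc k n g j 0) :
    ∀ s, s < k → φ (cyc k n f j s) = cyc k n g j s := by
  intro s
  induction s with
  | zero => exact fun _ => h0
  | succ s ih =>
    intro hs1
    have hs : s < k := by omega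
    have e1 : (φ (cyc k n f j s), φ (cyc k n f j ((s + 1) % k))) ∈ polyO k n g j := by
      rw [hpoly]
      exact Finset.mem_image_of_mem _ (edge_mem hk f j hs)
    have e2 : (cyc k n g j s, cyc k n g j ((s + 1) % k)) ∈ polyO k n g j :=
      edge_mem hk g j hs
    rw [ih hs] at e1
    have hout := out_unique hk hre_g e2 e1
    have hmod : (s + 1) % k = s + 1 := Nat.mod_eq_of_lt hs1
    rw [hmod] at hout
    exact hout.symm

theorem relRootLab_eq (hk : 3 ≤ k) {f g : Enc k n} (h : RelRootLab k n f g) : f = g := by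
  obtain ⟨φ, hφ0, hφ1, hpoly⟩ := h
  have hre_f : ∀ j, Reaches f.1 (some j) := (acyclic_iff_reaches f.1).1 f.2
  have hre_g : ∀ j, Reaches g.1 (some j) := (acyclic_iff_reaches g.1).1 g.2
  have h2k : 2 < k := by omega
  have h1k : 1 < k := by omega
  suffices key : ∀ (m : ℕ) (j : Fin n), Nat.find (hre_g j) ≤ m →
      f.1 j = g.1 j ∧ ∀ s, s < k → φ (cyc k n f.1 j s) = cyc k n g.1 j s by
    apply Subtype.ext
    funext j
    exact (key (Nat.find (hre_g j)) j le_rfl).1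
  intro m
  induction m with
  | zero =>
    intro j hj
    exfalso
    have h1 : (pstep g.1)^[Nat.find (hre_g j)] (some j) = none := Nat.find_spec (hre_g j)
    have h0 : Nat.find (hre_g j) = 0 := by omega
    rw [h0] at h1; simp at h1
  | succ m ih =>
    intro j hj
    cases hgj : g.1 j with
    | none =>
      -- The root edge belongs to polygon j of g.
      have hancG := anc_none (f := g.1) hgj
      have e0 : ((Sum.inl 0 : V k n), Sum.inl 1) ∈ polyO k n g.1 j := by
        have := edge_mem hk g.1 j (s := 0) (by omega)
        rw [cyc_zero, Nat.zero_add, Nat.mod_eq_of_lt h1k, cyc_one, hancG] at this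
        exact this
      rw [hpoly j] at e0
      obtain ⟨e', he', hmap⟩ := Finset.mem_image.1 e0
      obtain ⟨s, hs, rfl⟩ := mem_polyO hk he'
      obtain ⟨hm1, hm2⟩ := Prod.mk.injEq _ _ _ _ ▸ hmap
      have hc1 : cyc k n f.1 j s = Sum.inl 0 := by
        apply φ.injective; rw [hm1, hφ0]
      have hs1 : s ≤ 1 := by
        by_contra hs2
        rw [cyc_mid hk f.1 j (by omega) (by omega)] at hc1
        simp at hc1
      have hs0 : s = 0 := by
        rcases Nat.lt_or_ge s 1 with h' | h'
        · omega
        · exfalso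
          have : s = 1 := by omega
          rw [this] at hm2
          have : (1 + 1) % k = 2 := Nat.mod_eq_of_lt h2k
          rw [this] at hm2
          have hc2 : cyc k n f.1 j 2 = Sum.inl 1 := by
            apply φ.injective; rw [hm2, hφ1]
          rw [cyc_mid hk f.1 j (by omega) (by omega)] at hc2
          simp at hc2
      rw [hs0] at hc1 hm2
      rw [Nat.zero_add, Nat.mod_eq_of_lt h1k] at hm2
      have hc2 : cyc k n f.1 j 1 = Sum.inl 1 := by
        apply φ.injective
        rw [hm2, hφ1]
      have hfj : f.1 j = none := by
        apply root_anc hk hre_f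
        · exact ⟨0, by rw [← cyc_zero, hc1]⟩
        · exact ⟨1, by rw [← cyc_one, hc2]⟩
      refine ⟨hfj, ?_⟩
      apply cyc_chain hk hre_g φ (hpoly j)
      rw [hc1, hφ0, cyc_zero, hancG]
    | some p =>
      obtain ⟨i, t⟩ := p
      have ht : (t : ℕ) ≤ k - 2 := by have := t.isLt; omega
      have hlt := find_lt_of_parent hre_g hgj
      obtain ⟨hfi_eq, hcyci⟩ := ih i (by omega)
      have hij : i ≠ j := by
        intro hEq; rw [hEq] at hlt; omega
      obtain ⟨hG1, hG2⟩ := anc_eq_cyc hk hre_g hgj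
      -- the anchor edge of polygon j in g
      have e0 : (cyc k n g.1 j 0, cyc k n g.1 j 1) ∈ polyO k n g.1 j := by
        have := edge_mem hk g.1 j (s := 0) (by omega)
        rwa [Nat.zero_add, Nat.mod_eq_of_lt h1k] at this
      rw [hpoly j] at e0
      obtain ⟨e', he', hmap⟩ := Finset.mem_image.1 e0
      obtain ⟨s, hs, rfl⟩ := mem_polyO hk he'
      obtain ⟨hm1, hm2⟩ := Prod.mk.injEq _ _ _ _ ▸ hmap
      -- translate to f-cycles
      have E1 : cyc k n f.1 j s = cyc k n f.1 i ((t : ℕ) + 1) := by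
        apply φ.injective
        rw [hm1, hcyci _ (by omega), cyc_zero, hG1]
      have E2 : cyc k n f.1 j ((s + 1) % k) = cyc k n f.1 i (((t : ℕ) + 2) % k) := by
        apply φ.injective
        rw [hm2, hcyci _ (Nat.mod_lt _ (by omega)), cyc_one, hG2]
      -- show s = 0
      have hs0 : s = 0 := by
        rcases Nat.eq_zero_or_pos (t : ℕ) with ht0 | ht0
        · -- t = 0 : second vertex is interior of i
          have hu2 : cyc k n f.1 i (((t : ℕ) + 2) % k) = Sum.inr (i, ⟨0, by omega⟩) := by
            rw [ht0, Nat.mod_eq_of_lt h2k, cyc_mid hk f.1 i (by omega) (by omega)]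
          rw [hu2] at E2
          rcases cyc_inr hk hre_f (Nat.mod_lt _ (by omega)) E2 with ⟨hEq, _⟩ | ⟨hle, hdf⟩
          · exact absurd hEq hij
          · -- (s+1) % k ≤ 1 : s = 0 or s = k - 1
            rcases Nat.eq_zero_or_pos s with h' | h'
            · exact h'
            exfalso
            have hsk : s = k - 1 := by
              rcases Nat.lt_or_ge (s + 1) k with h2 | h2
              · rw [Nat.mod_eq_of_lt h2] at hle; omega
              · omega
            have hu1 : cyc k n f.1 j s = Sum.inr (j, ⟨k - 3, by omega⟩) := by
              rw [hsk, cyc_mid hk f.1 j (by omega) (by omega)]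
              simp only [Sum.inr.injEq, Prod.mk.injEq, Fin.mk.injEq]
              exact ⟨trivial, by omega⟩
            rw [hu1, ht0] at E1
            rcases cyc_inr hk hre_f (by omega) E1.symm with ⟨hEq, _⟩ | ⟨_, hdf'⟩
            · exact absurd hEq.symm hij
            · omega
        · -- t ≥ 1 : first vertex is interior of i
          have hu1 : cyc k n f.1 i ((t : ℕ) + 1) = Sum.inr (i, ⟨(t : ℕ) - 1, by omega⟩) := by
            rw [cyc_mid hk f.1 i (by omega) (by omega)]
            simp only [Sum.inr.injEq, Prod.mk.injEq, Fin.mk.injEq]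
            exact ⟨trivial, by omega⟩
          rw [hu1] at E1
          rcases cyc_inr hk hre_f hs E1 with ⟨hEq, _⟩ | ⟨hle, hdf⟩
          · exact absurd hEq hij
          · rcases Nat.eq_zero_or_pos s with h' | h'
            · exact h'
            exfalso
            have hs1 : s = 1 := by omega
            have hmod2 : (s + 1) % k = 2 := by rw [hs1]; exact Nat.mod_eq_of_lt h2k
            rw [hmod2] at E2
            have hu2 : cyc k n f.1 j 2 = Sum.inr (j, ⟨0, by omega⟩) :=
              cyc_mid hk f.1 j (by omega) (by omega)
            rw [hu2] at E2
            rcases cyc_inr hk hre_f (Nat.mod_lt _ (by omega)) E2.symm with ⟨hEq, _⟩ | ⟨_, hdf'⟩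
            · exact absurd hEq.symm hij
            · omega
      rw [hs0] at E1
      have E2' : cyc k n f.1 j 1 = cyc k n f.1 i (((t : ℕ) + 2) % k) := by
        rw [hs0] at E2
        rwa [Nat.zero_add, Nat.mod_eq_of_lt h1k] at E2
      -- show f j = some (i, t)
      have hfj : f.1 j = some (i, t) := by
        cases hfj' : f.1 j with
        | none =>
          exfalso
          have hanc := anc_none (f := f.1) hfj'
          have hA : cyc k n f.1 j 0 = Sum.inl 0 := by rw [cyc_zero, hanc]
          have hB : cyc k n f.1 j 1 = Sum.inl 1 := by rw [cyc_one, hanc]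
          rcases Nat.eq_zero_or_pos (t : ℕ) with ht0 | ht0
          · rw [hB] at E2'
            rw [ht0, Nat.mod_eq_of_lt h2k, cyc_mid hk f.1 i (by omega) (by omega)] at E2'
            simp at E2'
          · rw [hA] at E1
            rw [cyc_mid hk f.1 i (by omega) (by omega)] at E1
            simp at E1
        | some p' =>
          obtain ⟨i', t'⟩ := p'
          have ht' : (t' : ℕ) ≤ k - 2 := by have := t'.isLt; omega
          obtain ⟨hF1, hF2⟩ := anc_eq_cyc hk hre_f hfj'
          have Q1 : cyc k n f.1 i' ((t' : ℕ) + 1) = cyc k n f.1 i ((t : ℕ) + 1) := by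
            rw [← hF1, ← cyc_zero, E1]
          have Q2 : cyc k n f.1 i' (((t' : ℕ) + 2) % k) = cyc k n f.1 i (((t : ℕ) + 2) % k) := by
            rw [← hF2, ← cyc_one, E2']
          by_cases hii : i' = i
          · subst hii
            have h9 : (t' : ℕ) + 1 = (t : ℕ) + 1 :=
              cyc_inj hk hre_f (by omega) (by omega) Q1
            have h10 : t' = t := Fin.ext (by omega)
            rw [h10]
          · exfalso
            rcases Nat.eq_zero_or_pos (t : ℕ) with ht0 | ht0 <;>
              rcases Nat.eq_zero_or_pos (t' : ℕ) with ht0' | ht0'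
            · -- t = t' = 0 : compare second vertices
              rw [ht0, ht0', Nat.mod_eq_of_lt h2k,
                cyc_mid hk f.1 i' (by omega) (by omega),
                cyc_mid hk f.1 i (by omega) (by omega)] at Q2
              obtain ⟨h1, _⟩ := Prod.mk.injEq _ _ _ _ ▸ Sum.inr.inj Q2
              exact hii h1
            · -- t = 0, t' ≥ 1
              rw [cyc_mid hk f.1 i' (by omega) (by omega)] at Q1
              rw [ht0] at Q1
              rcases cyc_inr hk hre_f (by omega) Q1.symm with ⟨hEq, _⟩ | ⟨_, hd1⟩
              · exact hii hEq
              · rw [ht0, Nat.mod_eq_of_lt h2k,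
                  cyc_mid hk f.1 i (by omega) (by omega)] at Q2
                rcases cyc_inr hk hre_f (Nat.mod_lt _ (by omega)) Q2 with ⟨hEq, _⟩ | ⟨_, hd2⟩
                · exact hii hEq.symm
                · omega
            · -- t ≥ 1, t' = 0
              rw [cyc_mid hk f.1 i (by omega) (by omega)] at Q1
              rw [ht0'] at Q1
              rcases cyc_inr hk hre_f (by omega) Q1 with ⟨hEq, _⟩ | ⟨_, hd1⟩
              · exact hii hEq.symm
              · rw [ht0', Nat.mod_eq_of_lt h2k,
                  cyc_mid hk f.1 i' (by omega) (by omega)] at Q2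
                rcases cyc_inr hk hre_f (Nat.mod_lt _ (by omega)) Q2.symm with ⟨hEq, _⟩ | ⟨_, hd2⟩
                · exact hii hEq
                · omega
            · -- t, t' ≥ 1 : compare first vertices
              rw [cyc_mid hk f.1 i' (by omega) (by omega),
                cyc_mid hk f.1 i (by omega) (by omega)] at Q1
              obtain ⟨h1, _⟩ := Prod.mk.injEq _ _ _ _ ▸ Sum.inr.inj Q1
              exact hii h1
      refine ⟨hfj, ?_⟩
      apply cyc_chain hk hre_g φ (hpoly j)
      rw [E1, hcyci _ (by omega), cyc_zero, hG1]

end Part1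

section Counting

variable {k n : ℕ}

lemma pstep_iterate_none (f : Code k n) (r : ℕ) : (pstep f)^[r] none = none :=
  pstep_absorb f (rfl : (pstep f)^[0] none = none) (Nat.zero_le r)

lemma period_mul {f : Code k n} {j : Fin n} {r : ℕ}
    (h : (pstep f)^[r] (some j) = some j) (m : ℕ) :
    (pstep f)^[r * m] (some j) = some j := by
  induction m with
  | zero => simp
  | succ m ih => rw [Nat.mul_succ, Function.iterate_add_apply, h, ih]

lemma periodic_some {f : Code k n} {j : Fin n} {r : ℕ} (hr : 0 < r)
    (h : (pstep f)^[r] (some j) = some j) (a : ℕ) :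
    ∃ v, (pstep f)^[a] (some j) = some v := by
  cases hv : (pstep f)^[a] (some j) with
  | some v => exact ⟨v, rfl⟩
  | none =>
    exfalso
    have h2 := period_mul h (a + 1)
    have hle : a ≤ r * (a + 1) := by
      have : a + 1 ≤ r * (a + 1) := Nat.le_mul_of_pos_left _ hr
      omega
    have := pstep_absorb f hv hle
    rw [h2] at this
    simp at this

/-- The set of periodic polygons of an arbitrary code. -/
noncomputable def per (f : Code k n) : Finset (Fin n) :=
  @Finset.filter _ (fun j => ∃ r ∈ Finset.Icc 1 n, (pstep f)^[r] (some j) = some j)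
    (Classical.decPred _) Finset.univ

lemma mem_per {f : Code k n} {j : Fin n} :
    j ∈ per f ↔ ∃ r, 0 < r ∧ (pstep f)^[r] (some j) = some j := by
  rw [per, @Finset.mem_filter _ _ (Classical.decPred _) _ _]
  simp only [Finset.mem_univ, true_and, Finset.mem_Icc]
  constructor
  · rintro ⟨r, ⟨h1, _⟩, h⟩; exact ⟨r, h1, h⟩
  · rintro ⟨r, h1, h⟩
    have hex : ∃ r, 0 < r ∧ (pstep f)^[r] (some j) = some j := ⟨r, h1, h⟩
    obtain ⟨hr0pos, hr0spec⟩ := Nat.find_spec hex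
    refine ⟨Nat.find hex, ⟨hr0pos, ?_⟩, hr0spec⟩
    by_contra hlt
    push_neg at hlt
    have hfn : ∀ a : Fin (n + 1), ∃ v, (pstep f)^[(a : ℕ)] (some j) = some v :=
      fun a => periodic_some hr0pos hr0spec _
    choose gg hg using hfn
    have hni : ¬ Function.Injective gg := by
      intro hinj
      have := Fintype.card_le_of_injective gg hinj
      simp at this
    rw [Function.not_injective_iff] at hni
    obtain ⟨a, b, hEq, hne⟩ := hni
    have key : ∀ a b : Fin (n + 1), (a : ℕ) < (b : ℕ) → gg a = gg b → False := by
      intro a b hab hEq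
      have hval : (pstep f)^[(a : ℕ)] (some j) = (pstep f)^[(b : ℕ)] (some j) := by
        rw [hg a, hg b, hEq]
      have hblt : (b : ℕ) < Nat.find hex := by
        have := b.isLt; omega
      have hper' : (pstep f)^[Nat.find hex - (b : ℕ) + (a : ℕ)] (some j) = some j := by
        calc (pstep f)^[Nat.find hex - (b : ℕ) + (a : ℕ)] (some j)
            = (pstep f)^[Nat.find hex - (b : ℕ)] ((pstep f)^[(a : ℕ)] (some j)) := by
              rw [← Function.iterate_add_apply]
          _ = (pstep f)^[Nat.find hex - (b : ℕ)] ((pstep f)^[(b : ℕ)] (some j)) := by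
              rw [hval]
          _ = (pstep f)^[Nat.find hex - (b : ℕ) + (b : ℕ)] (some j) := by
              rw [← Function.iterate_add_apply]
          _ = (pstep f)^[Nat.find hex] (some j) := by congr 1; omega
          _ = some j := hr0spec
      have : Nat.find hex ≤ Nat.find hex - (b : ℕ) + (a : ℕ) :=
        Nat.find_le ⟨by omega, hper'⟩
      omega
    rcases Nat.lt_trichotomy (a : ℕ) (b : ℕ) with h' | h' | h'
    · exact key a b h' hEq
    · exact hne (Fin.ext h')
    · exact key b a h' hEq.symm

lemma per_next {f : Code k n} {j : Fin n} (hj : j ∈ per f) :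
    ∃ ic : Fin n × Fin (k - 1), f j = some ic ∧ ic.1 ∈ per f := by
  obtain ⟨r, hr, hspec⟩ := mem_per.1 hj
  cases hf : f j with
  | none =>
    exfalso
    obtain ⟨r', rfl⟩ : ∃ r', r = r' + 1 := ⟨r - 1, by omega⟩
    rw [Function.iterate_succ_apply, pstep_some, hf] at hspec
    simp only [Option.map_none] at hspec
    rw [pstep_iterate_none] at hspec
    simp at hspec
  | some ic =>
    have h1 : pstep f (some j) = some ic.1 := by rw [pstep_some, hf]; rfl
    refine ⟨ic, rfl, mem_per.2 ⟨r, hr, ?_⟩⟩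
    calc (pstep f)^[r] (some ic.1) = (pstep f)^[r] (pstep f (some j)) := by rw [h1]
      _ = (pstep f)^[r + 1] (some j) := (Function.iterate_succ_apply _ _ _).symm
      _ = pstep f ((pstep f)^[r] (some j)) := Function.iterate_succ_apply' _ _ _
      _ = pstep f (some j) := by rw [hspec]
      _ = some ic.1 := h1

lemma per_inj {f : Code k n} {j1 j2 i : Fin n} {c1 c2 : Fin (k - 1)}
    (h1 : j1 ∈ per f) (h2 : j2 ∈ per f)
    (hf1 : f j1 = some (i, c1)) (hf2 : f j2 = some (i, c2)) : j1 = j2 := by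
  obtain ⟨r1, hr1, hs1⟩ := mem_per.1 h1
  obtain ⟨r2, hr2, hs2⟩ := mem_per.1 h2
  have key : ∀ (j : Fin n) (c : Fin (k - 1)), f j = some (i, c) →
      (pstep f)^[r1 * r2] (some j) = some j →
      (pstep f)^[r1 * r2 - 1] (some i) = some j := by
    intro j c hf hper
    have hstep : pstep f (some j) = some i := by rw [pstep_some, hf]; rfl
    calc (pstep f)^[r1 * r2 - 1] (some i)
        = (pstep f)^[r1 * r2 - 1] (pstep f (some j)) := by rw [hstep]
      _ = (pstep f)^[r1 * r2 - 1] ((pstep f)^[1] (some j)) := rfl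
      _ = (pstep f)^[r1 * r2 - 1 + 1] (some j) := by rw [← Function.iterate_add_apply]
      _ = (pstep f)^[r1 * r2] (some j) := by
            congr 1
            have := Nat.mul_pos hr1 hr2
            omega
      _ = some j := hper
  have e1 := key j1 c1 hf1 (period_mul hs1 r2)
  have e2 := key j2 c2 hf2 (by rw [Nat.mul_comm]; exact period_mul hs2 r1)
  rw [e1] at e2
  exact Option.some.inj e2

lemma per_surj {f : Code k n} {i : Fin n} (hi : i ∈ per f) :
    ∃ j, j ∈ per f ∧ ∃ c, f j = some (i, c) := by
  obtain ⟨r, hr, hs⟩ := mem_per.1 hi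
  obtain ⟨v, hv⟩ := periodic_some hr hs (r - 1)
  have hstep : pstep f (some v) = some i := by
    calc pstep f (some v) = pstep f ((pstep f)^[r - 1] (some i)) := by rw [hv]
      _ = (pstep f)^[r - 1 + 1] (some i) := (Function.iterate_succ_apply' _ _ _).symm
      _ = (pstep f)^[r] (some i) := by congr 1; omega
      _ = some i := hs
  obtain ⟨c, hc⟩ : ∃ c, f v = some (i, c) := by
    rw [pstep_some] at hstep
    cases hfv : f v with
    | none => rw [hfv] at hstep; simp at hstep
    | some ic =>
      rw [hfv] at hstep
      obtain ⟨a, b⟩ := ic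
      simp only [Option.map_some] at hstep
      have : a = i := Option.some.inj hstep
      exact ⟨b, by rw [this]⟩
  refine ⟨v, mem_per.2 ⟨r, hr, ?_⟩, c, hc⟩
  calc (pstep f)^[r] (some v) = (pstep f)^[r] ((pstep f)^[r - 1] (some i)) := by rw [hv]
    _ = (pstep f)^[r + (r - 1)] (some i) := by rw [← Function.iterate_add_apply]
    _ = (pstep f)^[(r - 1) + r] (some i) := by congr 1; omega
    _ = (pstep f)^[r - 1] ((pstep f)^[r] (some i)) := Function.iterate_add_apply _ _ _ _
    _ = (pstep f)^[r - 1] (some i) := by rw [hs]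
    _ = some v := hv

/-- Relative step: polygons in `S` act as sinks. -/
def rstep (S : Finset (Fin n)) (f : Code k n) : Option (Fin n) → Option (Fin n) :=
  fun o => o.bind fun j => if j ∈ S then none else (f j).map Prod.fst

lemma rstep_congr {S : Finset (Fin n)} {f g : Code k n}
    (h : ∀ j ∉ S, f j = g j) : rstep S f = rstep S g := by
  funext o
  match o with
  | none => rfl
  | some j =>
    by_cases hj : j ∈ S
    · simp [rstep, hj]
    · simp [rstep, hj, h j hj]

lemma rstep_to_pstep {S : Finset (Fin n)} {f : Code k n} :
    ∀ (r : ℕ) (o : Option (Fin n)), (rstep S f)^[r] o = none →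
      ∃ r', ((pstep f)^[r'] o = none ∨ ∃ i ∈ S, (pstep f)^[r'] o = some i) := by
  intro r
  induction r with
  | zero => exact fun o h => ⟨0, Or.inl h⟩
  | succ r ih =>
    intro o h
    match o with
    | none => exact ⟨0, Or.inl rfl⟩
    | some j =>
      by_cases hj : j ∈ S
      · exact ⟨0, Or.inr ⟨j, hj, rfl⟩⟩
      · rw [Function.iterate_succ_apply] at h
        have hstep : rstep S f (some j) = pstep f (some j) := by simp [rstep, pstep, hj]
        rw [hstep] at h
        obtain ⟨r', hr'⟩ := ih _ h
        refine ⟨r' + 1, ?_⟩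
        rw [Function.iterate_succ_apply]
        exact hr'

lemma pstep_to_rstep {S : Finset (Fin n)} {f : Code k n} :
    ∀ (r : ℕ) (o : Option (Fin n)),
      ((pstep f)^[r] o = none ∨ ∃ i ∈ S, (pstep f)^[r] o = some i) →
      ∃ r', (rstep S f)^[r'] o = none := by
  intro r
  induction r with
  | zero =>
    intro o h
    match o with
    | none => exact ⟨0, rfl⟩
    | some j =>
      rcases h with h | ⟨i, hi, h⟩
      · exact absurd h (by simp)
      · have hji : j = i := Option.some.inj h
        exact ⟨1, by simp [rstep, hji ▸ hi]⟩
  | succ r ih =>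
    intro o h
    match o with
    | none => exact ⟨0, rfl⟩
    | some j =>
      by_cases hj : j ∈ S
      · exact ⟨1, by simp [rstep, hj]⟩
      · rw [Function.iterate_succ_apply] at h
        obtain ⟨r', hr'⟩ := ih _ h
        refine ⟨r' + 1, ?_⟩
        rw [Function.iterate_succ_apply,
          show rstep S f (some j) = pstep f (some j) from by simp [rstep, pstep, hj]]
        exact hr'

lemma none_or_per (f : Code k n) (j : Fin n) :
    (∃ r, (pstep f)^[r] (some j) = none) ∨
    ∃ r, ∃ i ∈ per f, (pstep f)^[r] (some j) = some i := by
  by_cases hnone : ∃ r, (pstep f)^[r] (some j) = none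
  · exact Or.inl hnone
  push_neg at hnone
  right
  have hfn : ∀ a : Fin (n + 1), ∃ v, (pstep f)^[(a : ℕ)] (some j) = some v := by
    intro a
    cases h : (pstep f)^[(a : ℕ)] (some j) with
    | none => exact absurd h (hnone _)
    | some v => exact ⟨v, rfl⟩
  choose gg hg using hfn
  have hni : ¬ Function.Injective gg := by
    intro hinj
    have := Fintype.card_le_of_injective gg hinj
    simp at this
  rw [Function.not_injective_iff] at hni
  obtain ⟨a, b, hEq, hne⟩ := hni
  have key : ∀ a b : Fin (n + 1), (a : ℕ) < (b : ℕ) → gg a = gg b →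
      ∃ r, ∃ i ∈ per f, (pstep f)^[r] (some j) = some i := by
    intro a b hab hEq
    refine ⟨(a : ℕ), gg a, ?_, hg a⟩
    apply mem_per.2
    refine ⟨(b : ℕ) - (a : ℕ), by omega, ?_⟩
    calc (pstep f)^[(b : ℕ) - (a : ℕ)] (some (gg a))
        = (pstep f)^[(b : ℕ) - (a : ℕ)] ((pstep f)^[(a : ℕ)] (some j)) := by rw [hg a]
      _ = (pstep f)^[(b : ℕ) - (a : ℕ) + (a : ℕ)] (some j) := by
          rw [← Function.iterate_add_apply]
      _ = (pstep f)^[(b : ℕ)] (some j) := by congr 1; omega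
      _ = some (gg b) := hg b
      _ = some (gg a) := by rw [hEq]
  rcases Nat.lt_trichotomy (a : ℕ) (b : ℕ) with h' | h' | h'
  · exact key a b h' hEq
  · exact absurd (Fin.ext h') hne
  · exact key b a h' hEq.symm

lemma stay_in (f : Code k n) (S : Finset (Fin n))
    (hcl : ∀ j ∈ S, ∃ i ∈ S, pstep f (some j) = some i) :
    ∀ (q : ℕ) (j : Fin n), j ∈ S → ∃ i ∈ S, (pstep f)^[q] (some j) = some i := by
  intro q
  induction q with
  | zero => exact fun j hj => ⟨j, hj, rfl⟩
  | succ q ih =>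
    intro j hj
    obtain ⟨i, hi, hstep⟩ := hcl j hj
    obtain ⟨i', hi', h'⟩ := ih i hi
    exact ⟨i', hi', by rw [Function.iterate_succ_apply, hstep]; exact h'⟩

lemma exists_iterate_fix {γ : Type*} [Finite γ] {u : γ → γ}
    (hu : Function.Injective u) (x : γ) : ∃ r, 0 < r ∧ u^[r] x = x := by
  obtain ⟨a, b, hne, hEq⟩ := Finite.exists_ne_map_eq_of_infinite (fun a : ℕ => u^[a] x)
  have key : ∀ a b : ℕ, a < b → u^[a] x = u^[b] x → ∃ r, 0 < r ∧ u^[r] x = x := by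
    intro a b hab hEq
    refine ⟨b - a, by omega, ?_⟩
    have h2 : u^[a] (u^[b - a] x) = u^[a] x := by
      rw [← Function.iterate_add_apply]
      rw [show a + (b - a) = b from by omega]
      exact hEq.symm
    exact Function.Injective.iterate hu a h2
  rcases Nat.lt_trichotomy a b with h' | h' | h'
  · exact key a b h' hEq
  · exact absurd h' hne
  · exact key b a h' hEq.symm

end Counting

section Fiber1

variable {k n : ℕ}

/-- Colored permutation data on `S`. -/
def CPerm (k n : ℕ) (S : Finset (Fin n)) : Type :=
  {p : {x : Fin n // x ∈ S} → {x : Fin n // x ∈ S} × Fin (k - 1) //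
    Function.Bijective fun x => (p x).1}

/-- Codes vanishing on `S` and grounded relative to `S`. -/
def GCode (k n : ℕ) (S : Finset (Fin n)) : Type :=
  {h : Code k n // (∀ j ∈ S, h j = none) ∧
    ∀ j : Fin n, ∃ r, (rstep S h)^[r] (some j) = none}

def assemble1 (S : Finset (Fin n)) (p : CPerm k n S) (h : GCode k n S) : Code k n :=
  fun j => if hj : j ∈ S then some ((p.1 ⟨j, hj⟩).1.1, (p.1 ⟨j, hj⟩).2) else h.1 j

lemma assemble1_step (S : Finset (Fin n)) (p : CPerm k n S) (h : GCode k n S)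
    (x : {x : Fin n // x ∈ S}) :
    pstep (assemble1 S p h) (some x.1) = some ((p.1 x).1.1) := by
  rw [pstep_some, assemble1, dif_pos x.2]
  rfl

lemma assemble1_iter (S : Finset (Fin n)) (p : CPerm k n S) (h : GCode k n S) :
    ∀ (r : ℕ) (x : {x : Fin n // x ∈ S}),
      (pstep (assemble1 S p h))^[r] (some x.1) =
        some (((fun x => (p.1 x).1)^[r] x).1) := by
  intro r
  induction r with
  | zero => intro x; rfl
  | succ r ih =>
    intro x
    rw [Function.iterate_succ_apply, Function.iterate_succ_apply]
    rw [show pstep (assemble1 S p h) (some x.1) = some ((p.1 x).1.1) from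
      assemble1_step S p h x]
    exact ih ((p.1 x).1)

lemma per_assemble1 (S : Finset (Fin n)) (p : CPerm k n S) (h : GCode k n S) :
    per (assemble1 S p h) = S := by
  set g := assemble1 S p h with hg
  apply Finset.ext
  intro j
  constructor
  · intro hj
    by_contra hjS
    obtain ⟨r0, hr0⟩ := h.2.2 j
    have hcongr : rstep S h.1 = rstep S g := by
      apply rstep_congr
      intro j' hj'
      rw [hg]
      show h.1 j' = assemble1 S p h j'
      rw [assemble1, dif_neg hj']
    rw [hcongr] at hr0
    obtain ⟨r', hr'⟩ := rstep_to_pstep r0 (some j) hr0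
    obtain ⟨d, hd, hds⟩ := mem_per.1 hj
    rcases hr' with hnone | ⟨i, hi, hsome⟩
    · have h1 := period_mul hds (r' + 1)
      have h2 := pstep_absorb g hnone (show r' ≤ d * (r' + 1) by
        have : r' + 1 ≤ d * (r' + 1) := Nat.le_mul_of_pos_left _ hd
        omega)
      rw [h1] at h2; simp at h2
    · have hcl : ∀ j' ∈ S, ∃ i' ∈ S, pstep g (some j') = some i' := by
        intro j' hj'
        exact ⟨(p.1 ⟨j', hj'⟩).1.1, (p.1 ⟨j', hj'⟩).1.2, assemble1_step S p h ⟨j', hj'⟩⟩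
      have hq : d * (r' + 1) - r' + r' = d * (r' + 1) := by
        have : r' + 1 ≤ d * (r' + 1) := Nat.le_mul_of_pos_left _ hd
        omega
      obtain ⟨i', hi', h'⟩ := stay_in g S hcl (d * (r' + 1) - r') i hi
      have hfin : (pstep g)^[d * (r' + 1)] (some j) = some i' := by
        calc (pstep g)^[d * (r' + 1)] (some j)
            = (pstep g)^[d * (r' + 1) - r' + r'] (some j) := by rw [hq]
          _ = (pstep g)^[d * (r' + 1) - r'] ((pstep g)^[r'] (some j)) :=
              Function.iterate_add_apply _ _ _ _
          _ = (pstep g)^[d * (r' + 1) - r'] (some i) := by rw [hsome]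
          _ = some i' := h'
      rw [period_mul hds (r' + 1)] at hfin
      have : j = i' := Option.some.inj hfin
      exact hjS (this ▸ hi')
  · intro hjS
    have hinj : Function.Injective (fun x : {x : Fin n // x ∈ S} => (p.1 x).1) := p.2.1
    obtain ⟨r, hr, hfix⟩ := exists_iterate_fix hinj ⟨j, hjS⟩
    apply mem_per.2
    refine ⟨r, hr, ?_⟩
    rw [hg, assemble1_iter S p h r ⟨j, hjS⟩, hfix]

noncomputable def fiber1Equiv (S : Finset (Fin n)) :
    CPerm k n S × GCode k n S ≃ {g : Code k n // per g = S} := by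
  apply Equiv.ofBijective
    (fun ph => (⟨assemble1 S ph.1 ph.2, per_assemble1 S ph.1 ph.2⟩ :
      {g : Code k n // per g = S}))
  constructor
  · rintro ⟨p1, h1⟩ ⟨p2, h2⟩ hEq
    have hEq' : assemble1 S p1 h1 = assemble1 S p2 h2 := congrArg Subtype.val hEq
    have hp : p1 = p2 := by
      apply Subtype.ext
      funext x
      have hfx := congrFun hEq' x.1
      rw [assemble1, assemble1, dif_pos x.2, dif_pos x.2] at hfx
      have h2' := Option.some.inj hfx
      obtain ⟨ha, hb⟩ := Prod.mk.injEq _ _ _ _ ▸ h2'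
      have hx : (⟨x.1, x.2⟩ : {x : Fin n // x ∈ S}) = x := rfl
      rw [hx] at ha hb
      exact Prod.ext (Subtype.ext ha) hb
    have hh : h1 = h2 := by
      apply Subtype.ext
      funext j'
      by_cases hj' : j' ∈ S
      · rw [h1.2.1 j' hj', h2.2.1 j' hj']
      · have hfx := congrFun hEq' j'
        rwa [assemble1, assemble1, dif_neg hj', dif_neg hj'] at hfx
    rw [hp, hh]
  · rintro ⟨g, hper⟩
    have hmem : ∀ x : {x : Fin n // x ∈ S}, ∃ ic : Fin n × Fin (k - 1),
        g x.1 = some ic ∧ ic.1 ∈ S := by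
      intro x
      have hx : x.1 ∈ per g := by rw [hper]; exact x.2
      obtain ⟨ic, h1, h2⟩ := per_next hx
      exact ⟨ic, h1, by rwa [hper] at h2⟩
    choose qic hq hqS using hmem
    set p : {x : Fin n // x ∈ S} → {x : Fin n // x ∈ S} × Fin (k - 1) :=
      fun x => (⟨(qic x).1, hqS x⟩, (qic x).2) with hp
    have hbij : Function.Bijective fun x => (p x).1 := by
      constructor
      · intro x1 x2 hEq
        have hv : (qic x1).1 = (qic x2).1 := congrArg Subtype.val hEq
        have hx1 : x1.1 ∈ per g := by rw [hper]; exact x1.2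
        have hx2 : x2.1 ∈ per g := by rw [hper]; exact x2.2
        have e1 : g x1.1 = some ((qic x1).1, (qic x1).2) := by rw [← hq x1]
        have e2 : g x2.1 = some ((qic x2).1, (qic x2).2) := by rw [← hq x2]
        rw [hv] at e1
        exact Subtype.ext (per_inj hx1 hx2 e1 e2)
      · intro y
        have hy : y.1 ∈ per g := by rw [hper]; exact y.2
        obtain ⟨j', hj', c, hc⟩ := per_surj hy
        have hj'S : j' ∈ S := by rwa [← hper]
        refine ⟨⟨j', hj'S⟩, ?_⟩
        apply Subtype.ext
        show (qic ⟨j', hj'S⟩).1 = y.1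
        have e1 : g j' = some ((qic ⟨j', hj'S⟩).1, (qic ⟨j', hj'S⟩).2) := by
          rw [← hq ⟨j', hj'S⟩]
        rw [hc] at e1
        exact (Prod.mk.injEq _ _ _ _ ▸ Option.some.inj e1).1.symm
    have hgrounded : ∀ j : Fin n,
        ∃ r, (rstep S (fun j' => if j' ∈ S then none else g j'))^[r] (some j) = none := by
      have hcongr : rstep S (fun j' => if j' ∈ S then none else g j') = rstep S g := by
        apply rstep_congr
        intro j' hj'
        rw [if_neg hj']
      rw [hcongr]
      intro j
      rcases none_or_per g j with ⟨r, hr⟩ | ⟨r, i, hi, hr⟩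
      · exact pstep_to_rstep r (some j) (Or.inl hr)
      · exact pstep_to_rstep r (some j) (Or.inr ⟨i, by rwa [← hper], hr⟩)
    refine ⟨(⟨p, hbij⟩, ⟨fun j' => if j' ∈ S then none else g j',
      fun j hj => if_pos hj, hgrounded⟩), ?_⟩
    apply Subtype.ext
    show assemble1 S _ _ = g
    funext j'
    by_cases hj' : j' ∈ S
    · rw [assemble1, dif_pos hj']
      show some ((qic ⟨j', hj'⟩).1, (qic ⟨j', hj'⟩).2) = g j'
      rw [← hq ⟨j', hj'⟩]
    · rw [assemble1, dif_neg hj']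
      show (if j' ∈ S then none else g j') = g j'
      rw [if_neg hj']

end Fiber1

section Fiber2

variable {k n : ℕ}

def start (x : Option (Fin n × Fin (k - 1))) : Option (Fin n) := x.map Prod.fst

noncomputable def pathSet (f : Code k n) (x : Option (Fin n × Fin (k - 1))) :
    Finset (Fin n) :=
  @Finset.filter _ (fun j => ∃ r ∈ Finset.range (n + 1), (pstep f)^[r] (start x) = some j)
    (Classical.decPred _) Finset.univ

lemma mem_pathSet {f : Code k n} {x : Option (Fin n × Fin (k - 1))} {j : Fin n} :
    j ∈ pathSet f x ↔ ∃ r, r ≤ n ∧ (pstep f)^[r] (start x) = some j := by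
  rw [pathSet, @Finset.mem_filter _ _ (Classical.decPred _) _ _]
  simp only [Finset.mem_univ, true_and, Finset.mem_range]
  constructor
  · rintro ⟨r, h1, h2⟩; exact ⟨r, by omega, h2⟩
  · rintro ⟨r, h1, h2⟩; exact ⟨r, by omega, h2⟩

/-- Path data on `S`: a linear order on `S` together with colours. -/
def PathData (k n : ℕ) (S : Finset (Fin n)) : Type :=
  (Fin S.card ≃ {x : Fin n // x ∈ S}) × (Fin S.card → Fin (k - 1))

def assemble2f (S : Finset (Fin n)) (e : Fin S.card ≃ {x : Fin n // x ∈ S})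
    (c : Fin S.card → Fin (k - 1)) (h : GCode k n S) : Code k n :=
  fun j => if hj : j ∈ S then
      (if h2 : ((e.symm ⟨j, hj⟩ : Fin S.card) : ℕ) + 1 < S.card
        then some ((e ⟨(e.symm ⟨j, hj⟩ : ℕ) + 1, h2⟩).1, c ⟨(e.symm ⟨j, hj⟩ : ℕ) + 1, h2⟩)
        else none)
    else h.1 j

def assemble2x (S : Finset (Fin n)) (e : Fin S.card ≃ {x : Fin n // x ∈ S})
    (c : Fin S.card → Fin (k - 1)) : Option (Fin n × Fin (k - 1)) :=
  if h0 : 0 < S.card then some ((e ⟨0, h0⟩).1, c ⟨0, h0⟩) else none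

lemma assemble2f_at (S : Finset (Fin n)) (e : Fin S.card ≃ {x : Fin n // x ∈ S})
    (c : Fin S.card → Fin (k - 1)) (h : GCode k n S) (m : ℕ) (hm : m < S.card) :
    assemble2f S e c h (e ⟨m, hm⟩).1 =
      if h2 : m + 1 < S.card then some ((e ⟨m + 1, h2⟩).1, c ⟨m + 1, h2⟩) else none := by
  rw [assemble2f, dif_pos (e ⟨m, hm⟩).2]
  have h1 : (⟨(e ⟨m, hm⟩).1, (e ⟨m, hm⟩).2⟩ : {x : Fin n // x ∈ S}) = e ⟨m, hm⟩ := rfl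
  rw [h1, Equiv.symm_apply_apply]

lemma assemble2_iter (S : Finset (Fin n)) (e : Fin S.card ≃ {x : Fin n // x ∈ S})
    (c : Fin S.card → Fin (k - 1)) (h : GCode k n S) :
    ∀ (q m : ℕ) (hm : m < S.card),
      (pstep (assemble2f S e c h))^[q] (some (e ⟨m, hm⟩).1) =
        if h2 : m + q < S.card then some ((e ⟨m + q, h2⟩).1) else none := by
  intro q
  induction q with
  | zero =>
    intro m hm
    rw [Function.iterate_zero_apply, dif_pos (show m + 0 < S.card from hm)]
    have h4 : (⟨m + 0, show m + 0 < S.card from hm⟩ : Fin S.card) = ⟨m, hm⟩ :=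
      Fin.ext (by show m + 0 = m; omega)
    rw [h4]
  | succ q ih =>
    intro m hm
    rw [Function.iterate_succ_apply]
    have hstep : pstep (assemble2f S e c h) (some (e ⟨m, hm⟩).1) =
        if h2 : m + 1 < S.card then some ((e ⟨m + 1, h2⟩).1) else none := by
      rw [pstep_some, assemble2f_at S e c h m hm]
      by_cases h2 : m + 1 < S.card
      · rw [dif_pos h2, dif_pos h2]; rfl
      · rw [dif_neg h2, dif_neg h2]; rfl
    rw [hstep]
    by_cases h2 : m + 1 < S.card
    · rw [dif_pos h2, ih (m + 1) h2]
      by_cases h3 : m + 1 + q < S.card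
      · rw [dif_pos h3, dif_pos (show m + (q + 1) < S.card by omega)]
        have : (⟨m + 1 + q, h3⟩ : Fin S.card) = ⟨m + (q + 1), by omega⟩ :=
          Fin.ext (by show m + 1 + q = m + (q + 1); omega)
        rw [this]
      · rw [dif_neg h3, dif_neg (show ¬ m + (q + 1) < S.card by omega)]
    · rw [dif_neg h2, pstep_iterate_none, dif_neg (show ¬ m + (q + 1) < S.card by omega)]

lemma assemble2_start_iter (S : Finset (Fin n)) (e : Fin S.card ≃ {x : Fin n // x ∈ S})
    (c : Fin S.card → Fin (k - 1)) (h : GCode k n S) (r : ℕ) :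
    (pstep (assemble2f S e c h))^[r] (start (assemble2x S e c)) =
      if h2 : r < S.card then some ((e ⟨r, h2⟩).1) else none := by
  by_cases h0 : 0 < S.card
  · have hstart : start (assemble2x S e c) = some ((e ⟨0, h0⟩).1) := by
      rw [assemble2x, dif_pos h0]; rfl
    rw [hstart, assemble2_iter S e c h r 0 h0]
    by_cases h2 : 0 + r < S.card
    · rw [dif_pos h2, dif_pos (show r < S.card by omega)]
      have : (⟨0 + r, h2⟩ : Fin S.card) = ⟨r, by omega⟩ :=
        Fin.ext (by show 0 + r = r; omega)
      rw [this]
    · rw [dif_neg h2, dif_neg (show ¬ r < S.card by omega)]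
  · have hstart : start (assemble2x S e c) = none := by
      rw [assemble2x, dif_neg h0]; rfl
    rw [hstart, pstep_iterate_none, dif_neg (show ¬ r < S.card by omega)]

lemma assemble2_congr_rstep (S : Finset (Fin n)) (e : Fin S.card ≃ {x : Fin n // x ∈ S})
    (c : Fin S.card → Fin (k - 1)) (h : GCode k n S) :
    rstep S h.1 = rstep S (assemble2f S e c h) := by
  apply rstep_congr
  intro j' hj'
  rw [assemble2f, dif_neg hj']

lemma assemble2_acyclic (S : Finset (Fin n)) (e : Fin S.card ≃ {x : Fin n // x ∈ S})
    (c : Fin S.card → Fin (k - 1)) (h : GCode k n S) :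
    Acyclic (assemble2f S e c h) := by
  apply (acyclic_iff_reaches _).2
  intro j
  by_cases hj : j ∈ S
  · set i0 := e.symm ⟨j, hj⟩ with hi0
    refine ⟨S.card - (i0 : ℕ), ?_⟩
    have hj' : (some j : Option (Fin n)) = some ((e ⟨(i0 : ℕ), i0.isLt⟩).1) := by
      rw [Fin.eta, hi0, Equiv.apply_symm_apply]
    rw [hj', assemble2_iter S e c h _ _ i0.isLt,
      dif_neg (show ¬ (i0 : ℕ) + (S.card - (i0 : ℕ)) < S.card by
        have := i0.isLt; omega)]
  · obtain ⟨r, hr⟩ := h.2.2 j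
    rw [assemble2_congr_rstep S e c h] at hr
    obtain ⟨r', hr'⟩ := rstep_to_pstep r (some j) hr
    rcases hr' with hnone | ⟨i, hi, hsome⟩
    · exact ⟨r', hnone⟩
    · set i0 := e.symm ⟨i, hi⟩ with hi0
      refine ⟨(S.card - (i0 : ℕ)) + r', ?_⟩
      rw [Function.iterate_add_apply, hsome]
      have hi' : (some i : Option (Fin n)) = some ((e ⟨(i0 : ℕ), i0.isLt⟩).1) := by
        rw [Fin.eta, hi0, Equiv.apply_symm_apply]
      rw [hi', assemble2_iter S e c h _ _ i0.isLt,
        dif_neg (show ¬ (i0 : ℕ) + (S.card - (i0 : ℕ)) < S.card by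
          have := i0.isLt; omega)]

lemma card_le_n (S : Finset (Fin n)) : S.card ≤ n := by
  have := Finset.card_le_univ S
  simpa using this

lemma pathSet_assemble2 (S : Finset (Fin n)) (e : Fin S.card ≃ {x : Fin n // x ∈ S})
    (c : Fin S.card → Fin (k - 1)) (h : GCode k n S) :
    pathSet (assemble2f S e c h) (assemble2x S e c) = S := by
  apply Finset.ext
  intro j
  rw [mem_pathSet]
  constructor
  · rintro ⟨r, hr, hval⟩
    rw [assemble2_start_iter S e c h r] at hval
    by_cases h2 : r < S.card
    · rw [dif_pos h2] at hval
      have : (e ⟨r, h2⟩).1 = j := Option.some.inj hval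
      rw [← this]
      exact (e ⟨r, h2⟩).2
    · rw [dif_neg h2] at hval; simp at hval
  · intro hjS
    set i0 := e.symm ⟨j, hjS⟩ with hi0
    refine ⟨(i0 : ℕ), by have := i0.isLt; have := card_le_n S; omega, ?_⟩
    rw [assemble2_start_iter S e c h _, dif_pos i0.isLt]
    rw [Fin.eta, hi0, Equiv.apply_symm_apply]

end Fiber2

section Fiber2Equiv

variable {k n : ℕ}

noncomputable def fiber2Equiv (S : Finset (Fin n)) :
    PathData k n S × GCode k n S ≃
      {y : Enc k n × Option (Fin n × Fin (k - 1)) // pathSet y.1.1 y.2 = S} := by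
  apply Equiv.ofBijective (fun ph =>
    (⟨(⟨assemble2f S ph.1.1 ph.1.2 ph.2, assemble2_acyclic S ph.1.1 ph.1.2 ph.2⟩,
        assemble2x S ph.1.1 ph.1.2),
      pathSet_assemble2 S ph.1.1 ph.1.2 ph.2⟩ :
      {y : Enc k n × Option (Fin n × Fin (k - 1)) // pathSet y.1.1 y.2 = S}))
  constructor
  · rintro ⟨⟨e1, c1⟩, h1⟩ ⟨⟨e2, c2⟩, h2⟩ hEq
    have hval := congrArg Subtype.val hEq
    have hf : assemble2f S e1 c1 h1 = assemble2f S e2 c2 h2 :=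
      congrArg Subtype.val (congrArg Prod.fst hval)
    have hx : assemble2x S e1 c1 = assemble2x S e2 c2 := congrArg Prod.snd hval
    have hh : h1 = h2 := by
      apply Subtype.ext; funext j
      by_cases hj : j ∈ S
      · rw [h1.2.1 j hj, h2.2.1 j hj]
      · have := congrFun hf j
        rwa [assemble2f, assemble2f, dif_neg hj, dif_neg hj] at this
    have key : ∀ m (hm : m < S.card),
        e1 ⟨m, hm⟩ = e2 ⟨m, hm⟩ ∧ c1 ⟨m, hm⟩ = c2 ⟨m, hm⟩ := by
      intro m
      induction m with
      | zero =>
        intro hm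
        rw [assemble2x, assemble2x, dif_pos hm, dif_pos hm] at hx
        have h7 := Option.some.inj hx
        rw [Prod.mk.injEq] at h7
        exact ⟨Subtype.ext h7.1, h7.2⟩
      | succ m ihm =>
        intro hm
        have hm' : m < S.card := by omega
        obtain ⟨he, _⟩ := ihm hm'
        have h1' := assemble2f_at S e1 c1 h1 m hm'
        have h2' := assemble2f_at S e2 c2 h2 m hm'
        rw [← he] at h2'
        have hE : (if h2 : m + 1 < S.card
              then some ((e1 ⟨m + 1, h2⟩).1, c1 ⟨m + 1, h2⟩) else none) =
            (if h2 : m + 1 < S.card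
              then some ((e2 ⟨m + 1, h2⟩).1, c2 ⟨m + 1, h2⟩) else none) := by
          rw [← h1', ← h2', congrFun hf _]
        rw [dif_pos hm, dif_pos hm] at hE
        have h7 := Option.some.inj hE
        rw [Prod.mk.injEq] at h7
        exact ⟨Subtype.ext h7.1, h7.2⟩
    have he12 : e1 = e2 := by
      apply Equiv.ext
      intro i
      have h5 := (key (i : ℕ) i.isLt).1
      have h6 : (⟨(i : ℕ), i.isLt⟩ : Fin S.card) = i := rfl
      rwa [h6] at h5
    have hc12 : c1 = c2 := by
      funext i
      have h5 := (key (i : ℕ) i.isLt).2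
      have h6 : (⟨(i : ℕ), i.isLt⟩ : Fin S.card) = i := rfl
      rwa [h6] at h5
    rw [he12, hc12, hh]
  · rintro ⟨⟨⟨f, hacy⟩, x⟩, hpath⟩
    classical
    have hre : ∀ j, Reaches f (some j) := (acyclic_iff_reaches f).1 hacy
    have hrs : Reaches f (start x) := by
      cases x with
      | none => exact ⟨0, rfl⟩
      | some vc => exact hre vc.1
    set steps := Nat.find hrs with hsteps
    have hnone : (pstep f)^[steps] (start x) = none := Nat.find_spec hrs
    have hvals : ∀ a : Fin steps, ∃ v, (pstep f)^[(a : ℕ)] (start x) = some v :=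
      fun a => traj_some f hrs a.isLt
    choose vv hv using hvals
    have hsteps_le : steps ≤ n := find_le_n f hrs
    have hvS : ∀ a : Fin steps, vv a ∈ S := by
      intro a
      rw [← hpath]
      exact mem_pathSet.2 ⟨(a : ℕ), by have := a.isLt; omega, hv a⟩
    have hbij : Function.Bijective
        (fun a : Fin steps => (⟨vv a, hvS a⟩ : {x : Fin n // x ∈ S})) := by
      constructor
      · intro a b hEq2
        have hvab : vv a = vv b := congrArg Subtype.val hEq2
        by_contra hne
        have hne' : (a : ℕ) ≠ (b : ℕ) := fun hcc => hne (Fin.ext hcc)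
        rcases Nat.lt_or_ge (a : ℕ) (b : ℕ) with h' | h'
        · exact traj_inj f hrs h' b.isLt (by rw [hv a, hv b, hvab])
        · exact traj_inj f hrs (show (b : ℕ) < (a : ℕ) by omega) a.isLt
            (by rw [hv a, hv b, hvab])
      · rintro ⟨y, hy⟩
        rw [← hpath] at hy
        obtain ⟨r, hr, hval2⟩ := mem_pathSet.1 hy
        have hrlt : r < steps := by
          by_contra hge
          push_neg at hge
          have := pstep_absorb f hnone hge
          rw [hval2] at this; simp at this
        refine ⟨⟨r, hrlt⟩, ?_⟩
        apply Subtype.ext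
        show vv ⟨r, hrlt⟩ = y
        exact Option.some.inj ((hv ⟨r, hrlt⟩).symm.trans hval2)
    set E0 := Equiv.ofBijective _ hbij with hE0
    have hcard : steps = S.card := by
      have := Fintype.card_congr E0
      simpa [Fintype.card_coe] using this
    set e : Fin S.card ≃ {x : Fin n // x ∈ S} := (finCongr hcard.symm).trans E0 with he
    have hx0 : ∀ hp : 0 < steps, ∃ c0, x = some (vv ⟨0, hp⟩, c0) := by
      intro hp
      have h0 := hv ⟨0, hp⟩
      cases x with
      | none => simp [start] at h0
      | some vc =>
        obtain ⟨v0, c0⟩ := vc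
        refine ⟨c0, ?_⟩
        have : v0 = vv ⟨0, hp⟩ := Option.some.inj h0
        rw [this]
    have hfa : ∀ (a : ℕ) (h2 : a + 1 < steps),
        ∃ cc, f (vv ⟨a, by omega⟩) = some (vv ⟨a + 1, h2⟩, cc) := by
      intro a h2
      have hsucc : (pstep f)^[a + 1] (start x) = some (vv ⟨a + 1, h2⟩) := hv ⟨a + 1, h2⟩
      rw [Function.iterate_succ_apply', hv ⟨a, by omega⟩, pstep_some] at hsucc
      cases hfv : f (vv ⟨a, by omega⟩) with
      | none => rw [hfv] at hsucc; simp at hsucc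
      | some wc =>
        rw [hfv] at hsucc
        obtain ⟨w, cc⟩ := wc
        simp only [Option.map_some] at hsucc
        have : w = vv ⟨a + 1, h2⟩ := Option.some.inj hsucc
        exact ⟨cc, by rw [this]⟩
    choose cA hcA using hfa
    set c : Fin S.card → Fin (k - 1) := fun i =>
      if h0 : (i : ℕ) = 0 then
        (hx0 (by have := i.isLt; omega)).choose
      else cA ((i : ℕ) - 1) (by have := i.isLt; omega)
      with hc
    have hgrounded : ∀ j : Fin n,
        ∃ r, (rstep S (fun j' => if j' ∈ S then none else f j'))^[r] (some j) = none := by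
      have hcongr : rstep S (fun j' => if j' ∈ S then none else f j') = rstep S f :=
        rstep_congr (fun j' hj' => if_neg hj')
      rw [hcongr]
      intro j
      obtain ⟨r, hr⟩ := hre j
      exact pstep_to_rstep r (some j) (Or.inl hr)
    set hG : GCode k n S :=
      ⟨fun j' => if j' ∈ S then none else f j', fun j hj => if_pos hj, hgrounded⟩ with hGdef
    have hev : ∀ (m : ℕ) (hm : m < S.card),
        (e ⟨m, hm⟩).1 = vv ⟨m, by omega⟩ := by
      intro m hm
      rfl
    have hfeq : assemble2f S e c hG = f := by
      funext j
      by_cases hj : j ∈ S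
      · set i := e.symm ⟨j, hj⟩ with hi
        have hji : j = (e ⟨(i : ℕ), i.isLt⟩).1 := by
          rw [Fin.eta, hi, Equiv.apply_symm_apply]
        rw [hji, assemble2f_at S e c hG (i : ℕ) i.isLt]
        by_cases h2 : (i : ℕ) + 1 < S.card
        · rw [dif_pos h2]
          have hcval : c ⟨(i : ℕ) + 1, h2⟩ = cA (i : ℕ) (by omega) := rfl
          rw [hcval, hev _ h2, hev _ i.isLt]
          exact (hcA (i : ℕ) (by omega)).symm
        · rw [dif_neg h2]
          have hs1 : (pstep f)^[(i : ℕ) + 1] (start x) = none := by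
            apply pstep_absorb f hnone; omega
          rw [Function.iterate_succ_apply', hv ⟨(i : ℕ), by omega⟩, pstep_some] at hs1
          rw [hev _ i.isLt]
          exact (Option.map_eq_none_iff.1 hs1).symm
      · rw [assemble2f, dif_neg hj]
        show (if j ∈ S then none else f j) = f j
        rw [if_neg hj]
    have hxeq : assemble2x S e c = x := by
      by_cases h0 : 0 < S.card
      · rw [assemble2x, dif_pos h0]
        have hp : 0 < steps := by omega
        have hspec := (hx0 hp).choose_spec
        rw [hspec]
        rfl
      · rw [assemble2x, dif_neg h0]
        have hp : steps = 0 := by omega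
        have h0' : (pstep f)^[0] (start x) = none := by rw [← hp]; exact hnone
        cases x with
        | none => rfl
        | some vc => simp [start] at h0'
    refine ⟨((e, c), hG), ?_⟩
    apply Subtype.ext
    simp only [Prod.mk.injEq]
    exact ⟨Subtype.ext hfeq, hxeq⟩

end Fiber2Equiv

section Final

variable {k n : ℕ}

noncomputable def cpermEquivPathData (S : Finset (Fin n)) :
    CPerm k n S ≃ PathData k n S := by
  classical
  let e0 : Fin S.card ≃ {x : Fin n // x ∈ S} := (S.orderIsoOfFin rfl).toEquiv
  refine
    { toFun := fun p =>
        (e0.trans (Equiv.ofBijective _ p.2), fun i => (p.1 (e0 i)).2)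
      invFun := fun ec =>
        ⟨fun x => (ec.1 (e0.symm x), ec.2 (e0.symm x)), ?_⟩
      left_inv := ?_
      right_inv := ?_ }
  · have : (fun x => ((fun x => (ec.1 (e0.symm x), ec.2 (e0.symm x))) x).1) =
        fun x => ec.1 (e0.symm x) := rfl
    rw [this]
    exact (e0.symm.trans ec.1).bijective
  · intro p
    apply Subtype.ext
    funext x
    show ((e0.trans (Equiv.ofBijective _ p.2)) (e0.symm x), (p.1 (e0 (e0.symm x))).2) = p.1 x
    simp only [Equiv.trans_apply, Equiv.apply_symm_apply]
    show ((p.1 x).1, (p.1 x).2) = p.1 x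
    rfl
  · rintro ⟨E, c⟩
    refine Prod.ext_iff.2 ?_
    constructor
    · apply Equiv.ext
      intro i
      simp only [Equiv.trans_apply]
      show E (e0.symm (e0 i)) = E i
      rw [Equiv.symm_apply_apply]
    · funext i
      show c (e0.symm (e0 i)) = c i
      rw [Equiv.symm_apply_apply]

noncomputable def masterEquiv (k n : ℕ) :
    Code k n ≃ Enc k n × Option (Fin n × Fin (k - 1)) :=
  ((Equiv.sigmaFiberEquiv (per : Code k n → Finset (Fin n))).symm.trans
    (Equiv.sigmaCongrRight (fun S =>
      (fiber1Equiv S).symm.trans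
        ((Equiv.prodCongr (cpermEquivPathData S) (Equiv.refl (GCode k n S))).trans
          (fiber2Equiv S))))).trans
    (Equiv.sigmaFiberEquiv (fun y : Enc k n × Option (Fin n × Fin (k - 1)) =>
      pathSet y.1.1 y.2))

lemma card_enc (k n : ℕ) (hk : 3 ≤ k) :
    Nat.card (Enc k n) * ((k - 1) * n + 1) = ((k - 1) * n + 1) ^ n := by
  have h1 : Nat.card (Code k n) = ((k - 1) * n + 1) ^ n := by
    rw [Nat.card_eq_fintype_card, Fintype.card_fun]
    simp only [Fintype.card_option, Fintype.card_prod, Fintype.card_fin]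
    rw [Nat.mul_comm]
  have h2 : Nat.card (Code k n) =
      Nat.card (Enc k n × Option (Fin n × Fin (k - 1))) :=
    Nat.card_congr (masterEquiv k n)
  have h3 : Nat.card (Option (Fin n × Fin (k - 1))) = (k - 1) * n + 1 := by
    rw [Nat.card_eq_fintype_card]
    simp only [Fintype.card_option, Fintype.card_prod, Fintype.card_fin]
    rw [Nat.mul_comm]
  calc Nat.card (Enc k n) * ((k - 1) * n + 1)
      = Nat.card (Enc k n) * Nat.card (Option (Fin n × Fin (k - 1))) := by rw [h3]
    _ = Nat.card (Enc k n × Option (Fin n × Fin (k - 1))) := (Nat.card_prod _ _).symm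
    _ = ((k - 1) * n + 1) ^ n := by rw [← h2, h1]

end Final

/-- The number of labelled oriented-edge-rooted `k`-gonal 2-trees
with `n` polygons is `((k-1)n + 1)^(n-1)`. -/
theorem labelled_oriented_edge_rooted_count (k : ℕ) (hk : 3 ≤ k) (n : ℕ) :
    aRootLab k n = ((k - 1) * n + 1) ^ (n - 1) := by
  have hbij : Function.Bijective (Quot.mk (RelRootLab k n)) := by
    constructor
    · intro f g h
      have hEG := Quot.eq.1 h
      clear h
      induction hEG with
      | rel a b hab => exact relRootLab_eq hk hab
      | refl a => rfl
      | symm a b _ ih => exact ih.symm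
      | trans a b c _ _ ih1 ih2 => exact ih1.trans ih2
    · exact Quot.mk_surjective
  have h1 : aRootLab k n = Nat.card (Enc k n) := by
    rw [aRootLab]
    exact (Nat.card_congr (Equiv.ofBijective _ hbij)).symm
  have h2 := card_enc k n hk
  rw [h1]
  rcases Nat.eq_zero_or_pos n with hn | hn
  · subst hn
    simp only [Nat.mul_zero, Nat.zero_add, Nat.mul_one, pow_zero, Nat.zero_sub] at h2 ⊢
    omega
  · have hpos : 0 < (k - 1) * n + 1 := by positivity
    have h3 : ((k - 1) * n + 1) ^ n = ((k - 1) * n + 1) ^ (n - 1) * ((k - 1) * n + 1) := by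
      rw [← pow_succ]
      congr 1
      omega
    rw [h3] at h2
    exact Nat.eq_of_mul_eq_mul_right hpos h2

end KGonal2Trees
end

section
/- If B(x) = Σ_{n≥0} b_n x^n is the formal power series satisfying B(x) = exp(Σ_{i≥1} x^i B(x^i)^{k-1} / i), then the coefficients satisfy b_0 = 1 and n·b_n = Σ_{1≤j≤n} Σ_α (|α|+1) b_{α_1}···b_{α_{k-1}} b_{n-j}, where the inner sum runs over (k-1)-tuples α = (α_1,...,α_{k-1}) of nonnegative integers such that |α|+1 divides j, and |α| = α_1+···+α_{k-1}. -/
namespace KGonal2Trees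

open PowerSeries

/-- Composition of a power series `F` with `x^d`, i.e. the series `F(x^d)`. -/
noncomputable def compXPow (d : ℕ) (F : PowerSeries ℚ) : PowerSeries ℚ :=
  PowerSeries.mk fun n => if d ∣ n then PowerSeries.coeff (R := ℚ) (n / d) F else 0

/-- Exponential `exp(S)` of a power series `S` with zero constant term:
`exp(S) = Σ_{m ≥ 0} S^m / m!` (the coefficient of `x^n` only involves `m ≤ n`). -/
noncomputable def expS (S : PowerSeries ℚ) : PowerSeries ℚ :=
  PowerSeries.mk fun n =>
    ∑ m ∈ Finset.range (n + 1), PowerSeries.coeff (R := ℚ) n (S ^ m) / (m.factorial : ℚ)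

/-- The series `Σ_{i ≥ 1} x^i B(x^i)^(k-1) / i` (the `i`-th term has order `≥ i`, so the
coefficient of `x^n` only involves `1 ≤ i ≤ n`). -/
noncomputable def seqB (k : ℕ) (B : PowerSeries ℚ) : PowerSeries ℚ :=
  PowerSeries.mk fun n =>
    ∑ i ∈ Finset.Icc 1 n,
      PowerSeries.coeff (R := ℚ) n (PowerSeries.X ^ i * compXPow i B ^ (k - 1)) / (i : ℚ)


open Finset

lemma coeff_compXPow (d n : ℕ) (F : PowerSeries ℚ) :
    coeff (R := ℚ) n (compXPow d F) = if d ∣ n then coeff (R := ℚ) (n / d) F else 0 := coeff_mk _ _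

lemma compXPow_one {d : ℕ} (hd : 0 < d) : compXPow d (1 : PowerSeries ℚ) = 1 := by
  ext n
  rw [coeff_compXPow, coeff_one, coeff_one]
  rcases Nat.eq_zero_or_pos n with rfl | hn
  · simp
  · rw [if_neg hn.ne', ite_eq_right_iff]
    rintro ⟨m, rfl⟩
    rw [Nat.mul_div_cancel_left m hd, if_neg (show ¬ m = 0 by rintro rfl; omega)]

lemma compXPow_mul {d : ℕ} (hd : 0 < d) (F G : PowerSeries ℚ) :
    compXPow d (F * G) = compXPow d F * compXPow d G := by
  ext n
  rw [coeff_mul, coeff_compXPow]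
  simp only [coeff_compXPow]
  by_cases hdn : d ∣ n
  · obtain ⟨m, rfl⟩ := hdn
    rw [if_pos (Dvd.intro m rfl), Nat.mul_div_cancel_left m hd, coeff_mul]
    rw [← Finset.sum_filter_of_ne (s := antidiagonal (d * m))
      (p := fun p : ℕ × ℕ => d ∣ p.1 ∧ d ∣ p.2)
      (f := fun p => (if d ∣ p.1 then coeff (R := ℚ) (p.1 / d) F else 0) *
        (if d ∣ p.2 then coeff (R := ℚ) (p.2 / d) G else 0))
      (fun p hp hne => by
        constructor
        · by_contra hd1
          exact hne (by simp [hd1])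
        · by_contra hd2
          exact hne (by simp [hd2]))]
    refine Finset.sum_nbij' (fun q => (d * q.1, d * q.2)) (fun p => (p.1 / d, p.2 / d))
      ?_ ?_ ?_ ?_ ?_
    · rintro ⟨a, b⟩ hq
      rw [HasAntidiagonal.mem_antidiagonal] at hq
      simp only [mem_filter, HasAntidiagonal.mem_antidiagonal]
      exact ⟨by rw [← Nat.mul_add, hq], Dvd.intro a rfl, Dvd.intro b rfl⟩
    · rintro ⟨a, b⟩ hp
      simp only [mem_filter, HasAntidiagonal.mem_antidiagonal] at hp
      obtain ⟨hab, ⟨a', rfl⟩, ⟨b', rfl⟩⟩ := hp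
      simp only [HasAntidiagonal.mem_antidiagonal, Nat.mul_div_cancel_left _ hd]
      have : d * (a' + b') = d * m := by rw [Nat.mul_add, hab]
      exact Nat.eq_of_mul_eq_mul_left hd this
    · rintro ⟨a, b⟩ _
      simp [Nat.mul_div_cancel_left _ hd]
    · rintro ⟨a, b⟩ hp
      simp only [mem_filter, HasAntidiagonal.mem_antidiagonal] at hp
      obtain ⟨hab, ⟨a', rfl⟩, ⟨b', rfl⟩⟩ := hp
      simp [Nat.mul_div_cancel_left _ hd]
    · rintro ⟨a, b⟩ _
      simp [Nat.mul_div_cancel_left _ hd, Dvd.intro a rfl, Dvd.intro b rfl]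
  · rw [if_neg hdn]
    refine (Finset.sum_eq_zero fun p hp => ?_).symm
    rw [HasAntidiagonal.mem_antidiagonal] at hp
    by_cases h1 : d ∣ p.1
    · by_cases h2 : d ∣ p.2
      · exact absurd (hp ▸ Nat.dvd_add h1 h2) hdn
      · rw [if_neg h2, mul_zero]
    · rw [if_neg h1, zero_mul]

lemma compXPow_pow {d : ℕ} (hd : 0 < d) (B : PowerSeries ℚ) (p : ℕ) :
    compXPow d (B ^ p) = compXPow d B ^ p := by
  induction p with
  | zero => simpa using compXPow_one hd
  | succ p ih => rw [pow_succ, pow_succ, compXPow_mul hd, ih]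


lemma coeff_pow_eq_zero_of_lt {S : PowerSeries ℚ} (hS : coeff (R := ℚ) 0 S = 0) {m a : ℕ}
    (h : a < m) : coeff (R := ℚ) a (S ^ m) = 0 :=
  X_pow_dvd_iff.mp (pow_dvd_pow_of_dvd (X_dvd_iff.mpr
    (by rwa [← coeff_zero_eq_constantCoeff_apply])) m) a h

lemma exp_rec {S B : PowerSeries ℚ} (hS : coeff (R := ℚ) 0 S = 0) (hB : B = expS S)
    {n : ℕ} (hn : 1 ≤ n) :
    (n : ℚ) * coeff (R := ℚ) n B =
      ∑ j ∈ Icc 1 n, ((j : ℚ) * coeff (R := ℚ) j S) * coeff (R := ℚ) (n - j) B := by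
  obtain ⟨n, rfl⟩ : ∃ n', n = n' + 1 := ⟨n - 1, by omega⟩
  have hBc : ∀ a : ℕ, coeff (R := ℚ) a B
      = ∑ m ∈ range (a + 1), coeff (R := ℚ) a (S ^ m) / (m.factorial : ℚ) := by
    intro a; rw [hB]; exact coeff_mk _ _
  have h1 : ∀ m : ℕ, ((n + 1 : ℕ) : ℚ) * coeff (R := ℚ) (n + 1) (S ^ m)
      = (m : ℚ) * coeff (R := ℚ) n (S ^ (m - 1) * d⁄dX ℚ S) := by
    intro m
    have h := coeff_derivative (S ^ m) n
    rw [Derivation.leibniz_pow, map_nsmul, nsmul_eq_mul, smul_eq_mul] at h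
    push_cast at h ⊢
    linarith [h]
  calc ((n + 1 : ℕ) : ℚ) * coeff (R := ℚ) (n + 1) B
      = ∑ m ∈ range (n + 2), ((n + 1 : ℕ) : ℚ) * coeff (R := ℚ) (n + 1) (S ^ m) / (m.factorial : ℚ) := by
        rw [hBc (n + 1), Finset.mul_sum]
        exact Finset.sum_congr rfl fun m _ => (mul_div_assoc _ _ _).symm
    _ = ∑ m ∈ range (n + 2), (m : ℚ) * coeff (R := ℚ) n (S ^ (m - 1) * d⁄dX ℚ S) / (m.factorial : ℚ) := by
        exact Finset.sum_congr rfl fun m _ => by rw [h1 m]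
    _ = ∑ i ∈ range (n + 1), coeff (R := ℚ) n (S ^ i * d⁄dX ℚ S) / (i.factorial : ℚ) := by
        rw [Finset.sum_range_succ' (fun m => (m : ℚ) * coeff (R := ℚ) n (S ^ (m - 1) * d⁄dX ℚ S) / (m.factorial : ℚ)) (n + 1)]
        simp only [Nat.cast_zero, zero_mul, zero_div, add_zero, Nat.add_sub_cancel]
        refine Finset.sum_congr rfl fun i _ => ?_
        rw [Nat.factorial_succ]
        have hne : ((i : ℚ) + 1) ≠ 0 := by positivity
        have hfe : (i.factorial : ℚ) ≠ 0 := Nat.cast_ne_zero.mpr i.factorial_ne_zero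
        push_cast
        field_simp
    _ = ∑ p ∈ antidiagonal n, (∑ i ∈ range (n + 1), coeff (R := ℚ) p.1 (S ^ i) / (i.factorial : ℚ)) * coeff (R := ℚ) p.2 (d⁄dX ℚ S) := by
        simp only [coeff_mul, Finset.sum_div, Finset.sum_mul]
        rw [Finset.sum_comm]
        refine Finset.sum_congr rfl fun p _ => Finset.sum_congr rfl fun i _ => by ring
    _ = ∑ p ∈ antidiagonal n, coeff (R := ℚ) p.1 B * (coeff (R := ℚ) (p.2 + 1) S * ((p.2 + 1 : ℕ) : ℚ)) := by
        refine Finset.sum_congr rfl fun p hp => ?_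
        rw [HasAntidiagonal.mem_antidiagonal] at hp
        have hp1 : p.1 ≤ n := le_of_add_le_left hp.le
        rw [coeff_derivative, hBc p.1]
        congr 1
        · refine (Finset.sum_subset (by intro x hx; rw [mem_range] at *; omega) ?_).symm
          intro i _ hi
          rw [mem_range, not_lt] at hi
          rw [coeff_pow_eq_zero_of_lt hS (by omega), zero_div]
        · push_cast; ring_nf
    _ = ∑ j ∈ Icc 1 (n + 1), ((j : ℚ) * coeff (R := ℚ) j S) * coeff (R := ℚ) (n + 1 - j) B := by
        refine Finset.sum_nbij' (fun p => p.2 + 1) (fun j => (n + 1 - j, j - 1)) ?_ ?_ ?_ ?_ ?_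
        · rintro ⟨a, b⟩ hp
          rw [HasAntidiagonal.mem_antidiagonal] at hp
          simp only [mem_Icc]
          omega
        · intro j hj
          rw [mem_Icc] at hj
          rw [HasAntidiagonal.mem_antidiagonal]
          show n + 1 - j + (j - 1) = n
          omega
        · rintro ⟨a, b⟩ hp
          rw [HasAntidiagonal.mem_antidiagonal] at hp
          simp only [Prod.mk.injEq]
          omega
        · intro j hj
          rw [mem_Icc] at hj
          show j - 1 + 1 = j
          omega
        · rintro ⟨a, b⟩ hp
          rw [HasAntidiagonal.mem_antidiagonal] at hp
          simp only
          have : n + 1 - (b + 1) = a := by omega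
          rw [this]
          ring


lemma coeff_pow_pi (K m N : ℕ) (hmN : m < N) (B : PowerSeries ℚ) :
    coeff (R := ℚ) m (B ^ K) =
      ∑ α ∈ (Fintype.piFinset fun _ : Fin K => range N).filter (fun α => ∑ i, α i = m),
        ∏ i, coeff (R := ℚ) (α i) B := by
  have h0 : (B : PowerSeries ℚ) ^ K = ∏ _i : Fin K, B := by simp
  rw [h0, coeff_prod]
  refine Finset.sum_nbij' (fun l => ⇑l) (fun α => Finsupp.equivFunOnFinite.symm α)
    ?_ ?_ ?_ ?_ ?_
  · intro l hl
    rw [mem_finsuppAntidiag] at hl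
    simp only [mem_filter, Fintype.mem_piFinset, mem_range]
    refine ⟨fun i => ?_, hl.1⟩
    calc l i ≤ ∑ i ∈ univ, l i := Finset.single_le_sum (fun _ _ => Nat.zero_le _) (mem_univ i)
    _ = m := hl.1
    _ < N := hmN
  · intro α hα
    rw [mem_filter, Fintype.mem_piFinset] at hα
    rw [mem_finsuppAntidiag]
    constructor
    · rw [← hα.2]
      exact Finset.sum_congr rfl fun i _ => by simp
    · exact Finset.subset_univ _
  · intro l _; exact Finsupp.equivFunOnFinite_symm_coe l
  · intro α _; rfl
  · intro l _
    exact Finset.prod_congr rfl fun i _ => rfl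

lemma seqB_coeff (k : ℕ) (B : PowerSeries ℚ) {j : ℕ} (hj : 1 ≤ j) :
    (j : ℚ) * coeff (R := ℚ) j (seqB k B) =
      ∑ d ∈ j.divisors, (d : ℚ) * coeff (R := ℚ) (d - 1) (B ^ (k - 1)) := by
  rw [seqB, coeff_mk, Finset.mul_sum]
  have hstep : ∀ i ∈ Finset.Icc 1 j,
      (j : ℚ) * (coeff (R := ℚ) j (X ^ i * compXPow i B ^ (k - 1)) / (i : ℚ))
        = if i ∣ j then ((j / i : ℕ) : ℚ) * coeff (R := ℚ) (j / i - 1) (B ^ (k - 1)) else 0 := by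
    intro i hi
    rw [mem_Icc] at hi
    have hi0 : 0 < i := hi.1
    rw [← compXPow_pow hi0, coeff_X_pow_mul', if_pos hi.2, coeff_compXPow]
    by_cases hij : i ∣ j
    · have hij' : i ∣ j - i := (Nat.dvd_sub hij dvd_rfl)
      rw [if_pos hij', if_pos hij]
      have h1 : (j - i) / i = j / i - 1 := by
        obtain ⟨q, rfl⟩ := hij
        have hq : 1 ≤ q := by
          rcases Nat.eq_zero_or_pos q with rfl | h; · omega
          · exact h
        have h2 : i * q - i = i * (q - 1) := by
          rw [Nat.mul_sub, Nat.mul_one]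
        rw [Nat.mul_div_cancel_left q hi0, h2, Nat.mul_div_cancel_left _ hi0]
      rw [h1]
      have hcast : ((j / i : ℕ) : ℚ) = (j : ℚ) / (i : ℚ) := by
        rw [Nat.cast_div hij (by exact_mod_cast hi0.ne')]
      rw [hcast]
      ring
    · have hij' : ¬ i ∣ j - i := fun h => hij (by
        have := Nat.dvd_add h (dvd_refl i)
        rwa [Nat.sub_add_cancel hi.2] at this)
      rw [if_neg hij', if_neg hij]
      simp
  rw [Finset.sum_congr rfl hstep, ← Finset.sum_filter]
  have hset : Finset.filter (· ∣ j) (Finset.Icc 1 j) = j.divisors := by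
    rw [Nat.divisors, Finset.Ico_add_one_right_eq_Icc]
  rw [hset]
  exact Nat.sum_div_divisors j (fun d => (d : ℚ) * coeff (R := ℚ) (d - 1) (B ^ (k - 1)))


lemma inner_sum_eq (K : ℕ) (B : PowerSeries ℚ) {j : ℕ} (hj : 1 ≤ j) :
    ∑ α ∈ (Fintype.piFinset fun _ : Fin K => range (j + 1)).filter
        (fun α => (∑ i, α i) + 1 ∣ j),
      (((∑ i, α i) + 1 : ℕ) : ℚ) * ∏ i, coeff (R := ℚ) (α i) B
    = ∑ d ∈ j.divisors, (d : ℚ) * coeff (R := ℚ) (d - 1) (B ^ K) := by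
  have hmap : ∀ α ∈ (Fintype.piFinset fun _ : Fin K => range (j + 1)).filter
      (fun α => (∑ i, α i) + 1 ∣ j), (∑ i, α i) + 1 ∈ j.divisors := fun α hα =>
    Nat.mem_divisors.mpr ⟨(mem_filter.mp hα).2, by omega⟩
  rw [← Finset.sum_fiberwise_of_maps_to hmap
    (fun α => (((∑ i, α i) + 1 : ℕ) : ℚ) * ∏ i, coeff (R := ℚ) (α i) B)]
  refine Finset.sum_congr rfl fun d hd => ?_
  rw [Nat.mem_divisors] at hd
  have hd1 : 1 ≤ d := Nat.pos_of_dvd_of_pos hd.1 hj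
  have hdj : d ≤ j := Nat.le_of_dvd hj hd.1
  rw [coeff_pow_pi K (d - 1) (j + 1) (by omega) B, Finset.mul_sum]
  refine Finset.sum_congr ?_ ?_
  · rw [Finset.filter_filter]
    ext α
    simp only [mem_filter, Fintype.mem_piFinset, mem_range]
    constructor
    · rintro ⟨h1, _, h3⟩
      exact ⟨h1, by omega⟩
    · rintro ⟨h1, h2⟩
      refine ⟨h1, ?_, by omega⟩
      have : (∑ i, α i) + 1 = d := by omega
      rw [this]
      exact hd.1
  · intro α hα
    rw [mem_filter] at hα
    have h2 : (∑ i, α i) + 1 = d := by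
      have := hα.2
      omega
    rw [h2]

/-- If `B(x) = Σ b_n x^n` satisfies
`B(x) = exp(Σ_{i≥1} x^i B(x^i)^(k-1) / i)`, then `b_0 = 1` and
`n b_n = Σ_{1≤j≤n} Σ_α (|α|+1) b_{α_1} ⋯ b_{α_{k-1}} b_{n-j}`, the inner sum running over
`(k-1)`-tuples `α` of nonnegative integers with `|α| + 1 ∣ j`. -/
theorem coeff_recurrence (k : ℕ) (hk : 2 ≤ k) (B : PowerSeries ℚ)
    (hB : B = expS (seqB k B)) :
    PowerSeries.coeff (R := ℚ) 0 B = 1 ∧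
    ∀ n : ℕ, 1 ≤ n →
      (n : ℚ) * PowerSeries.coeff (R := ℚ) n B =
        ∑ j ∈ Finset.Icc 1 n,
          ∑ α ∈ (Fintype.piFinset fun _ : Fin (k - 1) => Finset.range (j + 1)).filter
              (fun α => (∑ i, α i) + 1 ∣ j),
            (((∑ i, α i) + 1 : ℕ) : ℚ) * (∏ i, PowerSeries.coeff (R := ℚ) (α i) B) *
              PowerSeries.coeff (R := ℚ) (n - j) B := by
  have hS : coeff (R := ℚ) 0 (seqB k B) = 0 := by
    rw [seqB, coeff_mk]
    simp
  constructor
  · rw [hB, expS, coeff_mk]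
    simp
  · intro n hn
    rw [exp_rec hS hB hn]
    refine Finset.sum_congr rfl fun j hj => ?_
    rw [mem_Icc] at hj
    rw [seqB_coeff k B hj.1, ← inner_sum_eq (k - 1) B hj.1, Finset.sum_mul]

end KGonal2Trees
end

section
/- Let p = k−1 ≥ 1 and let b(x) = Σ b_n x^n satisfy b(x) = exp(Σ_{i≥1} x^i b(x^i)^p / i). Then for every n, b_n is bounded above by the n-th coefficient c_n of the series c(x) defined by c = 1 + x c^{p+1}; consequently the radius of convergence ξ_p of b(x) satisfies ξ_p ≥ p^p/(p+1)^{p+1}. -/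
namespace KGonal2Trees

/-- Composition of a power series `F` with `x^d`, i.e. the series `F(x^d)`. -/
noncomputable def compXPowR (d : ℕ) (F : PowerSeries ℝ) : PowerSeries ℝ :=
  PowerSeries.mk fun n => if d ∣ n then PowerSeries.coeff (R := ℝ) (n / d) F else 0

/-- Exponential `exp(S)` of a power series `S` with zero constant term. -/
noncomputable def expSR (S : PowerSeries ℝ) : PowerSeries ℝ :=
  PowerSeries.mk fun n =>
    ∑ m ∈ Finset.range (n + 1), PowerSeries.coeff (R := ℝ) n (S ^ m) / (m.factorial : ℝ)

/-- The series `Σ_{i ≥ 1} x^i B(x^i)^(k-1) / i`. -/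
noncomputable def seqBR (k : ℕ) (B : PowerSeries ℝ) : PowerSeries ℝ :=
  PowerSeries.mk fun n =>
    ∑ i ∈ Finset.Icc 1 n,
      PowerSeries.coeff (R := ℝ) n (PowerSeries.X ^ i * compXPowR i B ^ (k - 1)) / (i : ℝ)

open PowerSeries Finset

/-! ### Auxiliary coefficientwise domination machinery -/

/-- Coefficientwise domination up to degree `n`. -/
def Dom (n : ℕ) (f F : PowerSeries ℝ) : Prop :=
  ∀ j ≤ n, 0 ≤ coeff (R := ℝ) j f ∧ coeff (R := ℝ) j f ≤ coeff (R := ℝ) j F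

lemma Dom.mul {n : ℕ} {f F g G : PowerSeries ℝ} (hf : Dom n f F) (hg : Dom n g G) :
    Dom n (f * g) (F * G) := by
  intro j hj
  rw [coeff_mul, coeff_mul]
  have h1 : ∀ ab ∈ antidiagonal j, ab.1 ≤ n ∧ ab.2 ≤ n := by
    intro ab hab
    rw [HasAntidiagonal.mem_antidiagonal] at hab
    omega
  constructor
  · refine Finset.sum_nonneg fun ab hab => mul_nonneg ?_ ?_
    · exact (hf ab.1 (h1 ab hab).1).1
    · exact (hg ab.2 (h1 ab hab).2).1
  · refine Finset.sum_le_sum fun ab hab => ?_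
    obtain ⟨ha, hb⟩ := h1 ab hab
    exact mul_le_mul (hf ab.1 ha).2 (hg ab.2 hb).2 (hg ab.2 hb).1
      (le_trans (hf ab.1 ha).1 (hf ab.1 ha).2)

lemma Dom.pow {n : ℕ} {f F : PowerSeries ℝ} (hf : Dom n f F) (q : ℕ) :
    Dom n (f ^ q) (F ^ q) := by
  induction q with
  | zero =>
    intro j hj
    simp only [pow_zero, coeff_one]
    split <;> norm_num
  | succ q ih =>
    rw [pow_succ, pow_succ]
    exact ih.mul hf

lemma dom_self {f : PowerSeries ℝ} (h : ∀ m, 0 ≤ coeff (R := ℝ) m f) (n : ℕ) : Dom n f f :=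
  fun j _ => ⟨h j, le_rfl⟩

/-- vanishing of low coefficients of powers -/
lemma coeff_pow_eq_zero' {f : PowerSeries ℝ} (hf : constantCoeff (R := ℝ) f = 0) :
    ∀ {n m : ℕ}, n < m → coeff (R := ℝ) n (f ^ m) = 0 := by
  intro n m
  induction m generalizing n with
  | zero => omega
  | succ m ih =>
    intro hnm
    rw [pow_succ, coeff_mul]
    refine Finset.sum_eq_zero fun ab hab => ?_
    rw [HasAntidiagonal.mem_antidiagonal] at hab
    rcases lt_or_ge ab.1 m with h0 | h0
    · rw [ih h0]; ring
    · have h2 : ab.2 = 0 := by omega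
      rw [h2]
      simp [coeff_zero_eq_constantCoeff, hf]

lemma coeff_pow_mul_eq_zero' {f g : PowerSeries ℝ} (hf : constantCoeff (R := ℝ) f = 0)
    {n m : ℕ} (h : n < m) : coeff (R := ℝ) n (f ^ m * g) = 0 := by
  rw [coeff_mul]
  refine Finset.sum_eq_zero fun ab hab => ?_
  rw [HasAntidiagonal.mem_antidiagonal] at hab
  rw [coeff_pow_eq_zero' hf (by omega)]
  ring

lemma coeff_mul_congr_right' {f g g' : PowerSeries ℝ} {n : ℕ}
    (h : ∀ b ≤ n, coeff (R := ℝ) b g = coeff (R := ℝ) b g') :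
    coeff (R := ℝ) n (f * g) = coeff (R := ℝ) n (f * g') := by
  rw [coeff_mul, coeff_mul]
  refine Finset.sum_congr rfl fun ab hab => ?_
  rw [HasAntidiagonal.mem_antidiagonal] at hab
  rw [h ab.2 (by omega)]

/-! ### The formal logarithm of `1/(1-y)` and its exponential -/

lemma sum_Icc_one (N : ℕ) (g : ℕ → ℝ) :
    ∑ i ∈ Finset.Icc 1 N, g i = ∑ l ∈ Finset.range N, g (l + 1) := by
  refine Finset.sum_nbij' (fun i => i - 1) (fun l => l + 1) ?_ ?_ ?_ ?_ ?_ <;>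
    intros a ha <;> simp_all [Finset.mem_Icc, Finset.mem_range] <;> omega

noncomputable def geomLog (y : PowerSeries ℝ) : PowerSeries ℝ :=
  PowerSeries.mk fun n => ∑ i ∈ Finset.Icc 1 n, PowerSeries.coeff (R := ℝ) n (y ^ i) / (i : ℝ)

lemma coeff_geomLog (y : PowerSeries ℝ) (n : ℕ) :
    coeff (R := ℝ) n (geomLog y) = ∑ i ∈ Finset.Icc 1 n, coeff (R := ℝ) n (y ^ i) / (i : ℝ) := by
  rw [geomLog, coeff_mk]

lemma constantCoeff_geomLog (y : PowerSeries ℝ) : constantCoeff (R := ℝ) (geomLog y) = 0 := by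
  rw [← coeff_zero_eq_constantCoeff, coeff_geomLog]
  simp

lemma coeff_expSR (S : PowerSeries ℝ) (n : ℕ) :
    coeff (R := ℝ) n (expSR S) = ∑ m ∈ Finset.range (n + 1), coeff (R := ℝ) n (S ^ m) / (m.factorial : ℝ) := by
  rw [expSR, coeff_mk]

lemma coeff_deriv_pow (f : PowerSeries ℝ) (i n : ℕ) :
    coeff (R := ℝ) n (PowerSeries.derivative ℝ (f ^ i)) =
      i * coeff (R := ℝ) n (f ^ (i - 1) * PowerSeries.derivative ℝ f) := by
  rw [(PowerSeries.derivative ℝ).leibniz_pow (a := f) i, smul_eq_mul, map_nsmul, nsmul_eq_mul]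

lemma one_sub_mul_deriv_geomLog (y : PowerSeries ℝ) (hy : constantCoeff (R := ℝ) y = 0) :
    (1 - y) * PowerSeries.derivative ℝ (geomLog y) = PowerSeries.derivative ℝ y := by
  refine PowerSeries.ext fun n => ?_
  set D := PowerSeries.derivative ℝ with hD
  set P : PowerSeries ℝ := ∑ l ∈ range (n + 1), y ^ l with hP
  have key : ∀ b ≤ n, coeff (R := ℝ) b (D (geomLog y)) = coeff (R := ℝ) b (P * D y) := by
    intro b hb
    rw [coeff_derivative, coeff_geomLog, Finset.sum_mul]
    have term : ∀ i ∈ Icc 1 (b + 1),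
        coeff (R := ℝ) (b + 1) (y ^ i) / (i : ℝ) * ((b : ℝ) + 1) =
          coeff (R := ℝ) b (y ^ (i - 1) * D y) := by
      intro i hi
      rw [mem_Icc] at hi
      have h1 : coeff (R := ℝ) b (D (y ^ i)) = i * coeff (R := ℝ) b (y ^ (i - 1) * D y) := coeff_deriv_pow y i b
      rw [coeff_derivative] at h1
      have hi0 : (i : ℝ) ≠ 0 := by
        have : 0 < i := hi.1
        exact_mod_cast this.ne'
      field_simp
      linarith [h1]
    rw [Finset.sum_congr rfl term]
    have reindex : ∑ i ∈ Icc 1 (b + 1), coeff (R := ℝ) b (y ^ (i - 1) * D y) =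
        ∑ l ∈ range (b + 1), coeff (R := ℝ) b (y ^ l * D y) := by
      rw [sum_Icc_one]
      simp
    rw [reindex]
    have extend : ∑ l ∈ range (b + 1), coeff (R := ℝ) b (y ^ l * D y) =
        ∑ l ∈ range (n + 1), coeff (R := ℝ) b (y ^ l * D y) := by
      refine Finset.sum_subset (Finset.range_subset_range.2 (by omega)) ?_
      intro l hl hlb
      rw [mem_range] at hl hlb
      exact coeff_pow_mul_eq_zero' hy (by omega)
    rw [extend, hP, Finset.sum_mul, map_sum]
  rw [coeff_mul_congr_right' key]
  have assoc : (1 - y) * (P * D y) = (1 - y ^ (n + 1)) * D y := by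
    rw [← mul_assoc]
    have geo : (1 - y) * P = 1 - y ^ (n + 1) := by
      rw [hP]
      linear_combination -geom_sum_mul y (n + 1)
    rw [geo]
  rw [assoc, sub_mul, map_sub, one_mul, coeff_pow_mul_eq_zero' hy (by omega), sub_zero]

lemma deriv_expSR (S : PowerSeries ℝ) (hS : constantCoeff (R := ℝ) S = 0) :
    PowerSeries.derivative ℝ (expSR S) = PowerSeries.derivative ℝ S * expSR S := by
  refine PowerSeries.ext fun n => ?_
  set D := PowerSeries.derivative ℝ with hD
  have lhs : coeff (R := ℝ) n (D (expSR S)) =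
      ∑ l ∈ range (n + 1), coeff (R := ℝ) n (S ^ l * D S) / (l.factorial : ℝ) := by
    rw [coeff_derivative, coeff_expSR, Finset.sum_mul, Finset.sum_range_succ']
    have h0 : coeff (R := ℝ) (n + 1) (S ^ 0) / (Nat.factorial 0 : ℝ) * ((n : ℝ) + 1) = 0 := by
      simp [coeff_one]
    rw [h0, add_zero]
    refine Finset.sum_congr rfl fun l hl => ?_
    have h1 : coeff (R := ℝ) n (D (S ^ (l + 1))) = (l + 1) * coeff (R := ℝ) n (S ^ l * D S) := by
      have := coeff_deriv_pow S (l + 1) n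
      simpa using this
    rw [coeff_derivative] at h1
    have hfac : ((l + 1).factorial : ℝ) = (l + 1) * (l.factorial : ℝ) := by
      rw [Nat.factorial_succ]; push_cast; ring
    rw [hfac]
    have hl1 : ((l : ℝ) + 1) ≠ 0 := by positivity
    have hlf : ((l.factorial : ℝ)) ≠ 0 := by positivity
    field_simp
    linear_combination h1
  have rhs : coeff (R := ℝ) n (D S * expSR S) =
      ∑ l ∈ range (n + 1), coeff (R := ℝ) n (S ^ l * D S) / (l.factorial : ℝ) := by
    set Q : PowerSeries ℝ := ∑ m ∈ range (n + 1), ((m.factorial : ℝ))⁻¹ • S ^ m with hQ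
    have key : ∀ b ≤ n, coeff (R := ℝ) b (expSR S) = coeff (R := ℝ) b Q := by
      intro b hb
      rw [coeff_expSR, hQ, map_sum]
      have extend : ∑ m ∈ range (b + 1), coeff (R := ℝ) b (S ^ m) / (m.factorial : ℝ) =
          ∑ m ∈ range (n + 1), coeff (R := ℝ) b (S ^ m) / (m.factorial : ℝ) := by
        refine Finset.sum_subset (Finset.range_subset_range.2 (by omega)) ?_
        intro m hm hmb
        rw [mem_range] at hm hmb
        rw [coeff_pow_eq_zero' hS (by omega)]
        simp
      rw [extend]
      refine Finset.sum_congr rfl fun m hm => ?_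
      rw [map_smul, smul_eq_mul, div_eq_inv_mul]
    rw [coeff_mul_congr_right' key, hQ, Finset.mul_sum, map_sum]
    refine Finset.sum_congr rfl fun l hl => ?_
    rw [mul_smul_comm, map_smul, smul_eq_mul, mul_comm (S ^ l) (D S), div_eq_inv_mul]
  rw [lhs, rhs]

lemma one_sub_mul_expSR_geomLog (y : PowerSeries ℝ) (hy : constantCoeff (R := ℝ) y = 0) :
    (1 - y) * expSR (geomLog y) = 1 := by
  set D := PowerSeries.derivative ℝ with hD
  set T := geomLog y with hT
  set E := expSR T with hE
  have hT0 : constantCoeff (R := ℝ) T = 0 := constantCoeff_geomLog y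
  have hDE : D E = D T * E := deriv_expSR T hT0
  have hstep1 : (1 - y) * D T = D y := one_sub_mul_deriv_geomLog y hy
  have hDF : D ((1 - y) * E) = 0 := by
    rw [Derivation.leibniz]
    have hD1y : D (1 - y) = -D y := by
      rw [map_sub, Derivation.map_one_eq_zero, zero_sub]
    rw [hD1y, hDE, smul_eq_mul, smul_eq_mul]
    linear_combination E * hstep1
  refine PowerSeries.ext fun n => ?_
  cases n with
  | zero =>
    have h1 : constantCoeff (R := ℝ) E = 1 := by
      rw [← coeff_zero_eq_constantCoeff_apply, hE, coeff_expSR]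
      simp
    rw [coeff_zero_eq_constantCoeff_apply, coeff_zero_eq_constantCoeff_apply, map_mul,
      map_sub, map_one, hy, sub_zero, one_mul, h1]
  | succ n =>
    have h1 := coeff_derivative ((1 - y) * E) n
    rw [← hD, hDF, map_zero] at h1
    have h2 : coeff (R := ℝ) (n + 1) ((1 - y) * E) = 0 := by
      have hn1 : ((n : ℝ) + 1) ≠ 0 := by positivity
      rcases mul_eq_zero.mp h1.symm with h | h
      · exact h
      · exact absurd h hn1
    rw [h2, coeff_one, if_neg (Nat.succ_ne_zero n)]

/-! ### Properties of the Fuss–Catalan series -/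

lemma C_one_le (p : ℕ) (C : PowerSeries ℝ) (hC : C = 1 + PowerSeries.X * C ^ (p + 1)) :
    ∀ m, 1 ≤ coeff (R := ℝ) m C := by
  have h0 : constantCoeff (R := ℝ) C = 1 := by
    conv_lhs => rw [hC]
    rw [map_add, map_one, map_mul, constantCoeff_X, zero_mul, add_zero]
  intro m
  induction m using Nat.strong_induction_on with
  | _ m IH =>
    match m with
    | 0 => rw [coeff_zero_eq_constantCoeff_apply, h0]
    | Nat.succ m =>
      have hco : coeff (R := ℝ) (m + 1) C = coeff (R := ℝ) m (C ^ (p + 1)) := by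
        conv_lhs => rw [hC]
        rw [map_add, coeff_one, if_neg (Nat.succ_ne_zero m), zero_add, coeff_succ_X_mul]
      rw [hco, pow_succ, coeff_mul]
      have hdom : Dom m C C := fun j hj => ⟨le_trans zero_le_one (IH j (by omega)), le_rfl⟩
      have hpow := hdom.pow p
      have hmem : ((0 : ℕ), m) ∈ antidiagonal m := by simp
      have he : coeff (R := ℝ) 0 (C ^ p) = 1 := by
        rw [coeff_zero_eq_constantCoeff_apply, map_pow, h0, one_pow]
      have hterm : (1 : ℝ) ≤ coeff (R := ℝ) 0 (C ^ p) * coeff (R := ℝ) m C := by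
        rw [he, one_mul]; exact IH m (by omega)
      refine le_trans hterm (Finset.single_le_sum
        (f := fun ab => coeff (R := ℝ) ab.1 (C ^ p) * coeff (R := ℝ) ab.2 C) ?_ hmem)
      intro ab hab
      rw [HasAntidiagonal.mem_antidiagonal] at hab
      exact mul_nonneg (hpow ab.1 (by omega)).1 (le_trans zero_le_one (IH ab.2 (by omega)))

lemma C_le_pow (p : ℕ) (C : PowerSeries ℝ) (hC : C = 1 + PowerSeries.X * C ^ (p + 1))
    (i : ℕ) (hi : 1 ≤ i) (q : ℕ) : coeff (R := ℝ) q C ≤ coeff (R := ℝ) (i * q) (C ^ i) := by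
  have hone := C_one_le p C hC
  have hnn : ∀ m, 0 ≤ coeff (R := ℝ) m C := fun m => le_trans zero_le_one (hone m)
  induction i, hi using Nat.le_induction with
  | base => rw [one_mul, pow_one]
  | succ i hi IH =>
    have hiq : (i + 1) * q = q + i * q := by ring
    rw [hiq, pow_succ']
    rw [coeff_mul]
    have hmem : ((q : ℕ), i * q) ∈ antidiagonal (q + i * q) := by simp
    have hterm : coeff (R := ℝ) q C ≤ coeff (R := ℝ) q C * coeff (R := ℝ) (i * q) (C ^ i) := by
      have h1 : (1 : ℝ) ≤ coeff (R := ℝ) (i * q) (C ^ i) := le_trans (hone q) IH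
      nlinarith [hnn q]
    refine le_trans hterm (Finset.single_le_sum
      (f := fun ab => coeff (R := ℝ) ab.1 C * coeff (R := ℝ) ab.2 (C ^ i)) ?_ hmem)
    intro ab hab
    exact mul_nonneg (hnn ab.1) ((dom_self hnn ab.2).pow i ab.2 le_rfl).1

/-- Let `p = k - 1 ≥ 1` and let `b(x) = Σ b_n x^n` satisfy
`b = exp(Σ_{i≥1} x^i b(x^i)^p / i)`.  Then each `b_n` is bounded above by the `n`-th
coefficient `c_n` of the Fuss–Catalan series `c = 1 + x c^(p+1)`; consequently the radius of
convergence `ξ_p` of `b` satisfies `ξ_p ≥ p^p / (p+1)^(p+1)`, i.e. `Σ b_n x^n` converges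
whenever `|x| < p^p / (p+1)^(p+1)`. -/
theorem coeff_le_fuss_catalan (p : ℕ) (hp : 1 ≤ p) (B C : PowerSeries ℝ)
    (hB : B = expSR (seqBR (p + 1) B))
    (hC : C = 1 + PowerSeries.X * C ^ (p + 1)) :
    (∀ n : ℕ, PowerSeries.coeff (R := ℝ) n B ≤ PowerSeries.coeff (R := ℝ) n C) ∧
    ∀ x : ℝ, |x| < (p : ℝ) ^ p / ((p : ℝ) + 1) ^ (p + 1) →
      Summable fun n : ℕ => PowerSeries.coeff (R := ℝ) n B * x ^ n := by
  have hone := C_one_le p C hC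
  have hCnn : ∀ m, 0 ≤ coeff (R := ℝ) m C := fun m => le_trans zero_le_one (hone m)
  set y : PowerSeries ℝ := X * C ^ p with hy
  have hy0 : constantCoeff (R := ℝ) y = 0 := by rw [hy, map_mul, constantCoeff_X, zero_mul]
  have hprod : C * (1 - y) = 1 := by
    rw [hy]
    linear_combination hC
  have hET : expSR (geomLog y) = C := by
    have h2 := one_sub_mul_expSR_geomLog y hy0
    calc expSR (geomLog y) = (C * (1 - y)) * expSR (geomLog y) := by rw [hprod, one_mul]
    _ = C * ((1 - y) * expSR (geomLog y)) := by ring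
    _ = C := by rw [h2, mul_one]
  have hyi : ∀ i : ℕ, y ^ i = X ^ i * C ^ (p * i) := by
    intro i
    rw [hy, mul_pow, ← pow_mul]
  set S : PowerSeries ℝ := seqBR (p + 1) B with hS
  have main : ∀ n, 0 ≤ coeff (R := ℝ) n B ∧ coeff (R := ℝ) n B ≤ coeff (R := ℝ) n C := by
    intro n
    induction n using Nat.strong_induction_on with
    | _ n IH =>
    have domST : Dom n S (geomLog y) := by
      intro j hj
      rw [hS, seqBR, coeff_mk, coeff_geomLog]
      have hpk : (p + 1) - 1 = p := by omega
      have domB : ∀ i, 1 ≤ i → i ≤ j → Dom (j - i) (compXPowR i B) (C ^ i) := by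
        intro i hi1 hij r hr
        rw [compXPowR, coeff_mk]
        split
        case isTrue hdvd =>
          have hrn : r / i < n := by
            have h1 : r / i ≤ r := Nat.div_le_self r i
            omega
          refine ⟨(IH (r / i) hrn).1, le_trans (IH (r / i) hrn).2 ?_⟩
          have := C_le_pow p C hC i hi1 (r / i)
          rwa [Nat.mul_div_cancel' hdvd] at this
        case isFalse =>
          exact ⟨le_rfl, ((dom_self hCnn r).pow i r le_rfl).1⟩
      have hterm : ∀ i, 1 ≤ i → i ≤ j →
          0 ≤ coeff (R := ℝ) j (X ^ i * compXPowR i B ^ ((p + 1) - 1)) ∧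
          coeff (R := ℝ) j (X ^ i * compXPowR i B ^ ((p + 1) - 1)) ≤ coeff (R := ℝ) j (y ^ i) := by
        intro i hi1 hij
        rw [hpk, coeff_X_pow_mul', if_pos hij, hyi, coeff_X_pow_mul', if_pos hij,
          mul_comm p i, pow_mul]
        have hd := (domB i hi1 hij).pow p
        exact ⟨(hd (j - i) le_rfl).1, (hd (j - i) le_rfl).2⟩
      constructor
      · refine Finset.sum_nonneg fun i hi => ?_
        rw [mem_Icc] at hi
        have := (hterm i hi.1 hi.2).1
        positivity
      · refine Finset.sum_le_sum fun i hi => ?_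
        rw [mem_Icc] at hi
        have h1 := (hterm i hi.1 hi.2).2
        have hipos : (0 : ℝ) < (i : ℝ) := by exact_mod_cast hi.1
        exact (div_le_div_iff_of_pos_right hipos).mpr h1
    have hBn : coeff (R := ℝ) n B = ∑ m ∈ range (n + 1), coeff (R := ℝ) n (S ^ m) / (m.factorial : ℝ) := by
      conv_lhs => rw [hB]
      exact coeff_expSR S n
    constructor
    · rw [hBn]
      refine Finset.sum_nonneg fun m _ => div_nonneg ((domST.pow m) n le_rfl).1 (by positivity)
    · rw [hBn, ← hET, coeff_expSR]
      refine Finset.sum_le_sum fun m _ => ?_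
      have h := ((domST.pow m) n le_rfl).2
      have hfacpos : (0 : ℝ) < (m.factorial : ℝ) := by
        exact_mod_cast Nat.factorial_pos m
      exact (div_le_div_iff_of_pos_right hfacpos).mpr h
  refine ⟨fun n => (main n).2, ?_⟩
  intro x hx
  set z := |x| with hzdef
  have hz0 : (0 : ℝ) ≤ z := abs_nonneg x
  have hp0 : (0 : ℝ) < p := by exact_mod_cast hp
  have hb1 : (1 : ℝ) ≤ 1 + 1 / p := by
    have : (0 : ℝ) ≤ 1 / p := by positivity
    linarith
  have hcont : ContinuousOn (fun w : ℝ => w - 1 - z * w ^ (p + 1)) (Set.Icc 1 (1 + 1 / p)) := by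
    apply Continuous.continuousOn
    exact (continuous_id.sub continuous_const).sub (continuous_const.mul (continuous_pow (p + 1)))
  have hf1 : (1 : ℝ) - 1 - z * 1 ^ (p + 1) ≤ 0 := by
    rw [one_pow]
    linarith
  have hkey : z * ((1 : ℝ) + 1 / p) ^ (p + 1) < 1 / p := by
    have h2 : ((1 : ℝ) + 1 / p) = ((p : ℝ) + 1) / p := by field_simp
    have hq : ((p : ℝ) ^ p / ((p : ℝ) + 1) ^ (p + 1)) * (((p : ℝ) + 1) / p) ^ (p + 1) = 1 / p := by
      rw [div_pow]
      have hppow : (0 : ℝ) < (p : ℝ) ^ (p + 1) := by positivity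
      have hppow2 : (0 : ℝ) < ((p : ℝ) + 1) ^ (p + 1) := by positivity
      field_simp
      ring
    have hpos : (0 : ℝ) < ((1 : ℝ) + 1 / p) ^ (p + 1) := by positivity
    calc z * ((1 : ℝ) + 1 / p) ^ (p + 1)
        < ((p : ℝ) ^ p / ((p : ℝ) + 1) ^ (p + 1)) * ((1 : ℝ) + 1 / p) ^ (p + 1) :=
          mul_lt_mul_of_pos_right hx hpos
      _ = 1 / p := by rw [h2]; exact hq
  have hfb : (0 : ℝ) ≤ (1 + 1 / p) - 1 - z * (1 + 1 / p) ^ (p + 1) := by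
    have : (1 : ℝ) + 1 / p - 1 = 1 / p := by ring
    linarith
  obtain ⟨w, hwmem, hfw⟩ :=
    intermediate_value_Icc hb1 hcont (Set.mem_Icc.mpr ⟨hf1, hfb⟩)
  have hw1 : (1 : ℝ) ≤ w := hwmem.1
  have hroot : w = 1 + z * w ^ (p + 1) := by
    simp only at hfw
    linarith [hfw]
  have hsucc : ∀ l : ℕ, coeff (R := ℝ) (l + 1) C = coeff (R := ℝ) l (C ^ (p + 1)) := by
    intro l
    conv_lhs => rw [hC]
    rw [map_add, coeff_one, if_neg (Nat.succ_ne_zero l), zero_add, coeff_succ_X_mul]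
  have hpart : ∀ N, ∑ m ∈ range N, coeff (R := ℝ) m C * z ^ m ≤ w := by
    intro N
    induction N with
    | zero => simpa using le_trans zero_le_one hw1
    | succ N IHN =>
      have hu0 : 0 ≤ ∑ m ∈ range N, coeff (R := ℝ) m C * z ^ m :=
        Finset.sum_nonneg fun m _ => mul_nonneg (hCnn m) (pow_nonneg hz0 m)
      have hpoly : ∀ q : ℕ, ∑ r ∈ range N, coeff (R := ℝ) r (C ^ q) * z ^ r ≤
          (∑ m ∈ range N, coeff (R := ℝ) m C * z ^ m) ^ q := by
        intro q
        induction q with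
        | zero =>
          cases N with
          | zero => simp
          | succ N =>
            have hterms : ∀ r ∈ range (N + 1),
                coeff (R := ℝ) r ((C : PowerSeries ℝ) ^ 0) * z ^ r = if r = 0 then 1 else 0 := by
              intro r _
              rw [pow_zero, coeff_one]
              by_cases hr : r = 0 <;> simp [hr]
            rw [Finset.sum_congr rfl hterms,
              Finset.sum_ite_eq' (range (N + 1)) 0 (fun _ => (1 : ℝ)),
              if_pos (Finset.mem_range.mpr (Nat.succ_pos N))]
            norm_num
        | succ q IHq =>
          have hCqnn : ∀ r : ℕ, 0 ≤ coeff (R := ℝ) r (C ^ q) :=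
            fun r => ((dom_self hCnn r).pow q r le_rfl).1
          have key : ∑ s ∈ range N, coeff (R := ℝ) s (C ^ (q + 1)) * z ^ s ≤
              (∑ m ∈ range N, coeff (R := ℝ) m C * z ^ m) *
                (∑ r ∈ range N, coeff (R := ℝ) r (C ^ q) * z ^ r) := by
            have expand : (∑ m ∈ range N, coeff (R := ℝ) m C * z ^ m) *
                (∑ r ∈ range N, coeff (R := ℝ) r (C ^ q) * z ^ r)
                = ∑ ab ∈ range N ×ˢ range N,
                    coeff (R := ℝ) ab.1 C * coeff (R := ℝ) ab.2 (C ^ q) * z ^ (ab.1 + ab.2) := by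
              rw [Finset.sum_mul_sum, ← Finset.sum_product']
              refine Finset.sum_congr rfl fun ab _ => ?_
              rw [pow_add]
              ring
            have hbi : (range N).biUnion (fun s => antidiagonal s) =
                (range N ×ˢ range N).filter (fun ab => ab.1 + ab.2 < N) := by
              ext ab
              simp only [Finset.mem_biUnion, Finset.mem_filter, Finset.mem_product,
                Finset.mem_range, HasAntidiagonal.mem_antidiagonal]
              constructor
              · rintro ⟨s, hs, hab⟩
                omega
              · rintro ⟨⟨h1, h2⟩, h3⟩
                exact ⟨ab.1 + ab.2, h3, rfl⟩
            have hdisj : ∀ s ∈ range N, ∀ t ∈ range N, s ≠ t →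
                Disjoint (antidiagonal s) (antidiagonal t) := by
              intro s _ t _ hst
              rw [Finset.disjoint_left]
              intro ab h1 h2
              rw [HasAntidiagonal.mem_antidiagonal] at h1 h2
              omega
            have hLHS : ∑ s ∈ range N, coeff (R := ℝ) s (C ^ (q + 1)) * z ^ s
                = ∑ ab ∈ (range N ×ˢ range N).filter (fun ab => ab.1 + ab.2 < N),
                    coeff (R := ℝ) ab.1 C * coeff (R := ℝ) ab.2 (C ^ q) * z ^ (ab.1 + ab.2) := by
              rw [← hbi, Finset.sum_biUnion hdisj]
              refine Finset.sum_congr rfl fun s hs => ?_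
              rw [pow_succ', coeff_mul, Finset.sum_mul]
              refine Finset.sum_congr rfl fun ab hab => ?_
              rw [HasAntidiagonal.mem_antidiagonal] at hab
              rw [hab]
            rw [hLHS, expand]
            refine Finset.sum_le_sum_of_subset_of_nonneg (Finset.filter_subset _ _) ?_
            intro ab _ _
            have h1 : 0 ≤ coeff (R := ℝ) ab.2 (C ^ q) := hCqnn ab.2
            have h2 := hCnn ab.1
            positivity
          calc ∑ s ∈ range N, coeff (R := ℝ) s (C ^ (q + 1)) * z ^ s
              ≤ (∑ m ∈ range N, coeff (R := ℝ) m C * z ^ m) *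
                  (∑ r ∈ range N, coeff (R := ℝ) r (C ^ q) * z ^ r) := key
            _ ≤ (∑ m ∈ range N, coeff (R := ℝ) m C * z ^ m) *
                  (∑ m ∈ range N, coeff (R := ℝ) m C * z ^ m) ^ q :=
                mul_le_mul_of_nonneg_left IHq hu0
            _ = (∑ m ∈ range N, coeff (R := ℝ) m C * z ^ m) ^ (q + 1) := (pow_succ' _ q).symm
      have hsplit : ∑ m ∈ range (N + 1), coeff (R := ℝ) m C * z ^ m
          = 1 + z * ∑ r ∈ range N, coeff (R := ℝ) r (C ^ (p + 1)) * z ^ r := by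
        have hstep : ∑ m ∈ range (N + 1), coeff (R := ℝ) m C * z ^ m
            = (∑ l ∈ range N, coeff (R := ℝ) (l + 1) C * z ^ (l + 1)) + coeff (R := ℝ) 0 C * z ^ 0 :=
          Finset.sum_range_succ' _ N
        have h0 : coeff (R := ℝ) 0 C * z ^ 0 = 1 := by
          rw [pow_zero, mul_one, coeff_zero_eq_constantCoeff_apply]
          conv_lhs => rw [hC]
          rw [map_add, map_one, map_mul, constantCoeff_X, zero_mul, add_zero]
        rw [hstep, h0, Finset.mul_sum, add_comm]
        congr 1
        refine Finset.sum_congr rfl fun l _ => ?_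
        rw [hsucc l]
        ring
      rw [hsplit]
      have h1 : ∑ r ∈ range N, coeff (R := ℝ) r (C ^ (p + 1)) * z ^ r ≤ w ^ (p + 1) :=
        le_trans (hpoly (p + 1)) (pow_le_pow_left₀ hu0 IHN (p + 1))
      have h2 : z * ∑ r ∈ range N, coeff (R := ℝ) r (C ^ (p + 1)) * z ^ r ≤ z * w ^ (p + 1) :=
        mul_le_mul_of_nonneg_left h1 hz0
      linarith [hroot]
  have hsumC : Summable (fun n => coeff (R := ℝ) n C * z ^ n) :=
    summable_of_sum_range_le (fun n => mul_nonneg (hCnn n) (pow_nonneg hz0 n)) hpart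
  have hcomp : ∀ n, |coeff (R := ℝ) n B * x ^ n| ≤ coeff (R := ℝ) n C * z ^ n := by
    intro n
    rw [abs_mul, abs_pow, abs_of_nonneg (main n).1]
    exact mul_le_mul_of_nonneg_right (main n).2 (pow_nonneg hz0 n)
  exact Summable.of_abs (Summable.of_nonneg_of_le (fun n => abs_nonneg _) hcomp hsumC)

end KGonal2Trees
end
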